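/- arXiv:1902.08118 — 7 statements merged into one kernel-verified Lean document; each statement's English description precedes it below -/
import Mathlib

section
/- Every injective holomorphic self-map φ of ℂ \ {0} has the form φ(z) = a·z or φ(z) = a/z for some nonzero complex number a. -/
open Filter Topology Metric Set Polynomial Bornology

lemma contAt_of_punctured {f : ℂ → ℂ} {c L : ℂ} (hf : f c = L)
    (h : Tendsto f (𝓝[≠] c) (𝓝 L)) : ContinuousAt f c := by
  unfold ContinuousAt
  rw [hf, ← nhdsNE_sup_pure c, tendsto_sup]
  refine ⟨h, ?_⟩
  rw [tendsto_pure_left]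
  intro s hs
  rw [hf]
  exact mem_of_mem_nhds hs

lemma entire_ext {φ : ℂ → ℂ} (hdiff : DifferentiableOn ℂ φ {0}ᶜ) {L : ℂ}
    (h : Tendsto φ (𝓝[≠] (0:ℂ)) (𝓝 L)) : Differentiable ℂ (Function.update φ 0 L) := by
  set Φ := Function.update φ 0 L with hΦ
  have heq : ∀ z : ℂ, z ≠ 0 → Φ z = φ z := fun z hz => Function.update_of_ne hz _ _
  have hdiffat : ∀ z : ℂ, z ≠ 0 → DifferentiableAt ℂ Φ z := by
    intro z hz
    have h1 : DifferentiableAt ℂ φ z :=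
      hdiff.differentiableAt (isOpen_compl_singleton.mem_nhds hz)
    apply h1.congr_of_eventuallyEq
    filter_upwards [isOpen_compl_singleton.mem_nhds hz] with w hw
    exact heq w hw
  have hc : ContinuousAt Φ 0 := by
    apply contAt_of_punctured (Function.update_self 0 L φ)
    apply h.congr'
    filter_upwards [self_mem_nhdsWithin] with w hw
    exact (heq w hw).symm
  have h0 : AnalyticAt ℂ Φ 0 :=
    Complex.analyticAt_of_differentiable_on_punctured_nhds_of_continuousAt
      (by filter_upwards [self_mem_nhdsWithin] with w hw using hdiffat w hw) hc
  intro z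
  by_cases hz : z = 0
  · exact hz ▸ h0.differentiableAt
  · exact hdiffat z hz

lemma dichotomy {φ : ℂ → ℂ} (hdiff : DifferentiableOn ℂ φ {0}ᶜ)
    (hmaps : ∀ z : ℂ, z ≠ 0 → φ z ≠ 0) (hinj : Set.InjOn φ {0}ᶜ) :
    (∃ L, Tendsto φ (𝓝[≠] (0:ℂ)) (𝓝 L)) ∨
      Tendsto (fun z => (φ z)⁻¹) (𝓝[≠] (0:ℂ)) (𝓝 0) := by
  have hsub : ball (3:ℂ) 1 ⊆ {0}ᶜ := by
    intro z hz
    simp only [mem_ball, dist_eq_norm] at hz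
    simp only [mem_compl_iff, mem_singleton_iff]
    rintro rfl
    norm_num at hz
  have h3mem : (3:ℂ) ∈ ball (3:ℂ) 1 := mem_ball_self one_pos
  have h35mem : (3+1/2:ℂ) ∈ ball (3:ℂ) 1 := by
    simp only [mem_ball, dist_eq_norm]
    norm_num
  have han : AnalyticOnNhd ℂ φ (ball (3:ℂ) 1) :=
    ((hdiff.mono hsub).analyticOnNhd isOpen_ball)
  rcases han.is_constant_or_isOpen (convex_ball _ _).isPreconnected with ⟨w, hw⟩ | hopen
  · exfalso
    have := hinj (hsub h3mem) (hsub h35mem) ((hw _ h3mem).trans (hw _ h35mem).symm)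
    norm_num at this
  · have hV : IsOpen (φ '' ball (3:ℂ) 1) := hopen _ (Subset.refl _) isOpen_ball
    obtain ⟨ε, εpos, hball⟩ := Metric.isOpen_iff.mp hV (φ 3) (mem_image_of_mem φ h3mem)
    have key : ∀ z : ℂ, z ≠ 0 → ‖z‖ < 1 → ε ≤ ‖φ z - φ 3‖ := by
      intro z hz hz1
      by_contra hlt
      push_neg at hlt
      have : φ z ∈ φ '' ball (3:ℂ) 1 := by
        apply hball
        simpa [mem_ball, dist_eq_norm] using hlt
      obtain ⟨y, hy, hyz⟩ := this
      have hyz' : y = z := hinj (hsub hy) hz hyz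
      subst hyz'
      simp only [mem_ball, dist_eq_norm] at hy
      have : (2:ℝ) ≤ ‖y‖ := by
        have := norm_sub_norm_le ((3:ℂ)) (3 - y)
        simp only [sub_sub_cancel] at this
        have h3 : ‖(3:ℂ)‖ = 3 := by
          simpa using Complex.abs_ofNat 3
        rw [h3] at this
        have : 3 - ‖(3:ℂ) - y‖ ≤ ‖y‖ := by linarith
        have h2 : ‖(3:ℂ) - y‖ < 1 := by rw [norm_sub_rev]; exact hy
        linarith
      linarith
    set w := φ 3 with hwdef
    set g : ℂ → ℂ := fun z => (φ z - w)⁻¹ with hg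
    have hne : ∀ z : ℂ, z ≠ 0 → ‖z‖ < 1 → φ z - w ≠ 0 := by
      intro z hz hz1 h0
      have := key z hz hz1
      rw [h0] at this
      simp at this
      linarith
    have hdg : DifferentiableOn ℂ g (ball (0:ℂ) 1 \ {0}) := by
      apply DifferentiableOn.inv
      · apply DifferentiableOn.sub_const
        apply hdiff.mono
        intro z hz
        exact hz.2
      · intro z hz
        have hz1 : ‖z‖ < 1 := by simpa [mem_ball, dist_eq_norm] using hz.1
        exact hne z hz.2 hz1
    have hbdd : BddAbove (norm ∘ g '' (ball (0:ℂ) 1 \ {0})) := by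
      refine ⟨ε⁻¹, ?_⟩
      rintro x ⟨z, hz, rfl⟩
      have hz1 : ‖z‖ < 1 := by simpa [mem_ball, dist_eq_norm] using hz.1
      have hk := key z hz.2 hz1
      simp only [Function.comp_apply, hg, norm_inv]
      exact inv_anti₀ εpos hk
    have hupd := Complex.differentiableOn_update_limUnder_of_bddAbove
      (ball_mem_nhds (0:ℂ) one_pos) hdg hbdd
    set c := limUnder (𝓝[≠] (0:ℂ)) g with hc
    have hgc : Tendsto g (𝓝[≠] (0:ℂ)) (𝓝 c) := by
      have hca : ContinuousAt (Function.update g 0 c) 0 :=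
        (hupd.differentiableAt (ball_mem_nhds (0:ℂ) one_pos)).continuousAt
      have h1 : Tendsto (Function.update g 0 c) (𝓝[≠] (0:ℂ)) (𝓝 c) := by
        have := hca.tendsto
        rw [Function.update_self] at this
        exact this.mono_left nhdsWithin_le_nhds
      apply h1.congr'
      filter_upwards [self_mem_nhdsWithin] with z hz
      exact Function.update_of_ne hz _ _
    by_cases hc0 : c = 0
    · right
      rw [hc0] at hgc
      have hev : ∀ᶠ z in 𝓝[≠] (0:ℂ), g z / (1 + w * g z) = (φ z)⁻¹ := by
        filter_upwards [self_mem_nhdsWithin,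
          mem_nhdsWithin_of_mem_nhds (ball_mem_nhds (0:ℂ) one_pos)] with z hz hzb
        have hz1 : ‖z‖ < 1 := by simpa [mem_ball, dist_eq_norm] using hzb
        have h1 := hne z hz hz1
        have h2 := hmaps z hz
        rw [hg]
        field_simp
        rw [sub_add_cancel, div_self h2]
      have hlim : Tendsto (fun z => g z / (1 + w * g z)) (𝓝[≠] (0:ℂ)) (𝓝 ((0:ℂ) / (1 + w * 0))) :=
        hgc.div (tendsto_const_nhds.add (tendsto_const_nhds.mul hgc)) (by norm_num)
      rw [show (0:ℂ) / (1 + w * 0) = 0 by norm_num] at hlim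
      exact Tendsto.congr' hev hlim
    · left
      refine ⟨w + c⁻¹, ?_⟩
      have hev : ∀ᶠ z in 𝓝[≠] (0:ℂ), w + (g z)⁻¹ = φ z := by
        filter_upwards [self_mem_nhdsWithin,
          mem_nhdsWithin_of_mem_nhds (ball_mem_nhds (0:ℂ) one_pos)] with z hz hzb
        have hz1 : ‖z‖ < 1 := by simpa [mem_ball, dist_eq_norm] using hzb
        rw [hg]
        simp only [inv_inv]
        ring
      exact Tendsto.congr' hev (tendsto_const_nhds.add (hgc.inv₀ hc0))
lemma cobounded_of_punctured {f : ℂ → ℂ} {M : ℂ}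
    (h : Tendsto (fun z : ℂ => f z⁻¹) (𝓝[≠] (0:ℂ)) (𝓝 M)) :
    Tendsto f (cobounded ℂ) (𝓝 M) := by
  have h2 := h.comp tendsto_inv₀_cobounded'
  apply h2.congr'
  filter_upwards [tendsto_norm_cobounded_atTop.eventually_ge_atTop 1] with w hw
  simp [Function.comp, inv_inv]

lemma both_finite_false {φ : ℂ → ℂ} (hdiff : DifferentiableOn ℂ φ {0}ᶜ)
    (hinj : Set.InjOn φ {0}ᶜ)
    (h0 : ∃ L, Tendsto φ (𝓝[≠] (0:ℂ)) (𝓝 L))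
    (hinf : ∃ M, Tendsto (fun z : ℂ => φ z⁻¹) (𝓝[≠] (0:ℂ)) (𝓝 M)) : False := by
  obtain ⟨L, hL⟩ := h0
  obtain ⟨M, hM⟩ := hinf
  set Φ := Function.update φ 0 L with hΦdef
  have hΦ : Differentiable ℂ Φ := entire_ext hdiff hL
  have heq : ∀ z : ℂ, z ≠ 0 → Φ z = φ z := fun z hz => Function.update_of_ne hz _ _
  have hco : Tendsto Φ (cocompact ℂ) (𝓝 M) := by
    rw [← cobounded_eq_cocompact]
    apply (cobounded_of_punctured hM).congr'
    filter_upwards [tendsto_norm_cobounded_atTop.eventually_ge_atTop 1] with w hw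
    have hw0 : w ≠ 0 := by
      intro h0; rw [h0] at hw; simp at hw; linarith
    exact (heq w hw0).symm
  have h1 := hΦ.apply_eq_of_tendsto_cocompact 1 hco
  have h2 := hΦ.apply_eq_of_tendsto_cocompact 2 hco
  have h12 : φ (1:ℂ) = φ 2 := by
    rw [← heq 1 one_ne_zero, ← heq 2 two_ne_zero, h1, h2]
  have := hinj (by simp) (by simp) h12
  norm_num at this

lemma poly_of_growth : ∀ (m : ℕ) (Φ : ℂ → ℂ) (C R : ℝ), Differentiable ℂ Φ →
    (∀ w : ℂ, R ≤ ‖w‖ → ‖Φ w‖ ≤ C * ‖w‖ ^ m) →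
    ∃ p : ℂ[X], ∀ z, Φ z = p.eval z := by
  intro m
  induction m with
  | zero =>
    intro Φ C R hΦ hb
    obtain ⟨B, hB⟩ := (isCompact_closedBall (0:ℂ) R).exists_bound_of_continuousOn
      hΦ.continuous.continuousOn
    have hbdd : IsBounded (Set.range Φ) := by
      rw [isBounded_iff_forall_norm_le]
      refine ⟨max C B, ?_⟩
      rintro x ⟨z, rfl⟩
      rcases le_or_gt R ‖z‖ with h | h
      · simpa using (hb z h).trans (le_max_left _ _)
      · exact (hB z (by simpa [mem_closedBall, dist_eq_norm] using h.le)).trans (le_max_right _ _)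
    obtain ⟨cst, hcst⟩ := hΦ.exists_const_forall_eq_of_bounded hbdd
    exact ⟨Polynomial.C cst, fun z => by simp [← hcst z]⟩
  | succ m ih =>
    intro Φ C R hΦ hb
    set g := dslope Φ 0 with hgdef
    have hg : Differentiable ℂ g := by
      rw [← differentiableOn_univ] at hΦ ⊢
      rwa [Complex.differentiableOn_dslope univ_mem]
    have hgb : ∀ w : ℂ, max R 1 ≤ ‖w‖ → ‖g w‖ ≤ (C + ‖Φ 0‖) * ‖w‖ ^ m := by
      intro w hw
      have hw1 : (1:ℝ) ≤ ‖w‖ := le_trans (le_max_right _ _) hw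
      have hw0 : w ≠ 0 := by
        intro h; rw [h] at hw1; simp at hw1; linarith
      have hwR : R ≤ ‖w‖ := le_trans (le_max_left _ _) hw
      have hgw : g w = (Φ w - Φ 0) / w := by
        rw [hgdef, dslope_of_ne _ hw0, slope_def_field]
        simp
      rw [hgw, norm_div, div_le_iff₀ (by positivity)]
      have h1 : ‖Φ w - Φ 0‖ ≤ C * ‖w‖ ^ (m+1) + ‖Φ 0‖ := by
        have := norm_sub_le (Φ w) (Φ 0)
        have h2 := hb w hwR
        linarith
      have hpow : ‖w‖ ^ (m+1) = ‖w‖ ^ m * ‖w‖ := pow_succ _ _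
      have hwm : (1:ℝ) ≤ ‖w‖ ^ m * ‖w‖ := by
        have : (1:ℝ) ≤ ‖w‖ ^ m := one_le_pow₀ hw1
        nlinarith
      rw [hpow] at h1
      nlinarith [h1, mul_le_mul_of_nonneg_left hwm (norm_nonneg (Φ 0))]
    obtain ⟨p, hp⟩ := ih g (C + ‖Φ 0‖) (max R 1) hg hgb
    refine ⟨Polynomial.C (Φ 0) + Polynomial.X * p, fun z => ?_⟩
    have hslope := sub_smul_dslope Φ 0 z
    simp only [sub_zero, smul_eq_mul] at hslope
    rw [eval_add, eval_C, eval_mul, eval_X, ← hp z]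
    rw [hgdef] at *
    linear_combination -hslope
lemma linear_of_pole {φ : ℂ → ℂ} (hdiff : DifferentiableOn ℂ φ {0}ᶜ)
    (hmaps : ∀ z : ℂ, z ≠ 0 → φ z ≠ 0) (hinj : Set.InjOn φ {0}ᶜ)
    {L : ℂ} (hL : Tendsto φ (𝓝[≠] (0:ℂ)) (𝓝 L))
    (hinf : Tendsto (fun z : ℂ => (φ z⁻¹)⁻¹) (𝓝[≠] (0:ℂ)) (𝓝 0)) :
    ∃ a : ℂ, a ≠ 0 ∧ ∀ z : ℂ, z ≠ 0 → φ z = a * z := by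
  classical
  set Φ := Function.update φ 0 L with hΦdef
  have hΦ : Differentiable ℂ Φ := entire_ext hdiff hL
  have heq : ∀ z : ℂ, z ≠ 0 → Φ z = φ z := fun z hz => Function.update_of_ne hz _ _
  have hinf' : Tendsto (fun z : ℂ => (Φ z⁻¹)⁻¹) (𝓝[≠] (0:ℂ)) (𝓝 0) := by
    apply hinf.congr'
    filter_upwards [self_mem_nhdsWithin] with z hz
    rw [heq _ (inv_ne_zero hz)]
  have hpole : Tendsto (fun w : ℂ => (Φ w)⁻¹) (cobounded ℂ) (𝓝 0) :=
    cobounded_of_punctured (f := fun w : ℂ => (Φ w)⁻¹) hinf'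
  -- L = 0
  have hL0 : L = 0 := by
    by_contra hL0
    have hΦne : ∀ z : ℂ, Φ z ≠ 0 := by
      intro z
      by_cases hz : z = 0
      · rw [hz, hΦdef, Function.update_self]; exact hL0
      · rw [heq z hz]; exact hmaps z hz
    have hinv : Differentiable ℂ (fun z => (Φ z)⁻¹) := hΦ.inv hΦne
    have hco : Tendsto (fun z : ℂ => (Φ z)⁻¹) (cocompact ℂ) (𝓝 0) := by
      rw [← cobounded_eq_cocompact]; exact hpole
    have h1 := hinv.apply_eq_of_tendsto_cocompact 1 hco
    exact (inv_ne_zero (hΦne 1)) h1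
  have hΦ0 : Φ 0 = 0 := by rw [hΦdef, Function.update_self, hL0]
  -- the function at infinity
  set Hfun : ℂ → ℂ := fun z => (φ z⁻¹)⁻¹ with hHfun
  have hdiffH : DifferentiableOn ℂ Hfun {0}ᶜ := by
    intro z hz
    have hz0 : z ≠ 0 := hz
    apply DifferentiableAt.differentiableWithinAt
    have h1 : DifferentiableAt ℂ φ z⁻¹ :=
      hdiff.differentiableAt (isOpen_compl_singleton.mem_nhds (inv_ne_zero hz0))
    have h2 : DifferentiableAt ℂ (fun w : ℂ => φ w⁻¹) z := h1.comp z (differentiableAt_inv hz0)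
    exact h2.inv (hmaps _ (inv_ne_zero hz0))
  have hH : Differentiable ℂ (Function.update Hfun 0 0) := entire_ext hdiffH hinf
  set H := Function.update Hfun 0 0 with hHdef
  have hHan : AnalyticAt ℂ H 0 := hH.analyticAt 0
  have hHne : ∀ z : ℂ, z ≠ 0 → H z ≠ 0 := by
    intro z hz
    rw [hHdef, Function.update_of_ne hz]
    exact inv_ne_zero (hmaps _ (inv_ne_zero hz))
  have hnot : ¬ ∀ᶠ z in 𝓝 (0:ℂ), H z = 0 := by
    intro hev
    have hev' : ∀ᶠ z in 𝓝[≠] (0:ℂ), H z = 0 := hev.filter_mono nhdsWithin_le_nhds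
    obtain ⟨z, hz1, hz2⟩ := (hev'.and self_mem_nhdsWithin).exists
    exact hHne z hz2 hz1
  obtain ⟨n, u, hu_an, hu0, hu_eq⟩ := (hHan.exists_eventuallyEq_pow_smul_nonzero_iff).mpr hnot
  have hu0pos : (0:ℝ) < ‖u 0‖ := norm_pos_iff.mpr hu0
  have hu_norm : ∀ᶠ z in 𝓝 (0:ℂ), ‖u 0‖/2 < ‖u z‖ :=
    (hu_an.continuousAt.norm).eventually (eventually_gt_nhds (half_lt_self hu0pos))
  obtain ⟨r, rpos, hr⟩ := Metric.eventually_nhds_iff.mp (hu_eq.and hu_norm)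
  -- growth bound
  have hgrow : ∀ w : ℂ, max (2/r) 1 ≤ ‖w‖ → ‖Φ w‖ ≤ (2/‖u 0‖) * ‖w‖ ^ n := by
    intro w hw
    have hw1 : (1:ℝ) ≤ ‖w‖ := le_trans (le_max_right _ _) hw
    have hw0 : w ≠ 0 := by intro h; rw [h] at hw1; simp at hw1; linarith
    have hw2 : 2/r ≤ ‖w‖ := le_trans (le_max_left _ _) hw
    have hwr : dist w⁻¹ (0:ℂ) < r := by
      rw [dist_zero_right, norm_inv]
      have h1 : ‖w‖⁻¹ ≤ (2/r)⁻¹ := inv_anti₀ (by positivity) hw2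
      rw [inv_div] at h1
      linarith [half_lt_self rpos]
    obtain ⟨hHeq, hune⟩ := hr hwr
    have hHw : H w⁻¹ = (φ w)⁻¹ := by
      rw [hHdef, Function.update_of_ne (inv_ne_zero hw0), hHfun]
      simp only [inv_inv]
    have hHnorm : ‖H w⁻¹‖ = (‖w‖⁻¹) ^ n * ‖u w⁻¹‖ := by
      rw [hHeq]
      simp [norm_smul, norm_pow, norm_inv]
    have hφn : ‖φ w‖ = ‖H w⁻¹‖⁻¹ := by rw [hHw, norm_inv, inv_inv]
    rw [heq w hw0, hφn, hHnorm, mul_inv, inv_pow, inv_inv]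
    have ht : ‖u w⁻¹‖⁻¹ ≤ 2/‖u 0‖ := by
      have := inv_anti₀ (by positivity : (0:ℝ) < ‖u 0‖/2) hune.le
      rwa [inv_div] at this
    rw [mul_comm ((2:ℝ)/‖u 0‖)]
    exact mul_le_mul_of_nonneg_left ht (by positivity)
  obtain ⟨p, hp⟩ := poly_of_growth n Φ (2/‖u 0‖) (max (2/r) 1) hΦ hgrow
  -- root analysis
  have hp0 : p.eval 0 = 0 := by rw [← hp 0, hΦ0]
  have hpne : p ≠ 0 := by
    intro h
    have h1 := hp 1
    rw [h, eval_zero, heq 1 one_ne_zero] at h1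
    exact hmaps 1 one_ne_zero h1
  set k := rootMultiplicity 0 p with hk
  set q := p /ₘ (X - Polynomial.C 0) ^ k with hq
  have hq0 : q.eval 0 ≠ 0 := eval_divByMonic_pow_rootMultiplicity_ne_zero 0 hpne
  have hfac : (X - Polynomial.C 0) ^ k * q = p := pow_mul_divByMonic_rootMultiplicity_eq p 0
  have hqroots : ∀ b : ℂ, q.eval b ≠ 0 := by
    intro b hb
    by_cases hb0 : b = 0
    · exact hq0 (hb0 ▸ hb)
    · have : p.eval b = 0 := by
        rw [← hfac, eval_mul, hb, mul_zero]
      rw [← hp b, heq b hb0] at this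
      exact hmaps b hb0 this
  have hqdeg : q.natDegree = 0 := by
    by_contra hd
    have : 0 < q.degree := natDegree_pos_iff_degree_pos.mp (Nat.pos_of_ne_zero hd)
    obtain ⟨b, hb⟩ := Complex.exists_root this
    exact hqroots b hb
  obtain ⟨a, ha⟩ := natDegree_eq_zero.mp hqdeg
  have ha0 : a ≠ 0 := by
    intro h
    rw [h] at ha
    rw [← ha] at hq0
    simp at hq0
  have hform : ∀ z : ℂ, z ≠ 0 → φ z = z ^ k * a := by
    intro z hz
    rw [← heq z hz, hp z, ← hfac, eval_mul, eval_pow, eval_sub, eval_X, eval_C, ← ha, eval_C,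
      sub_zero]
  have hk0 : k ≠ 0 := by
    intro h
    have := hp0
    rw [← hfac, h, pow_zero, one_mul, ← ha, eval_C] at this
    exact ha0 this
  have hk1 : k = 1 := by
    by_contra hk1
    have hk2 : 2 ≤ k := by omega
    set ω := Complex.exp (2 * Real.pi * Complex.I / k) with hω
    have hω0 : ω ≠ 0 := Complex.exp_ne_zero _
    have hωk : ω ^ k = 1 := by
      rw [hω, ← Complex.exp_nat_mul]
      rw [mul_div_cancel₀]
      · exact Complex.exp_two_pi_mul_I
      · exact_mod_cast Nat.cast_ne_zero.mpr hk0
    have hφω : φ ω = φ 1 := by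
      rw [hform ω hω0, hform 1 one_ne_zero, hωk, one_pow]
    have hω1 : ω = 1 := hinj hω0 (one_ne_zero (α := ℂ)) hφω
    rw [hω, Complex.exp_eq_one_iff] at hω1
    obtain ⟨m, hm⟩ := hω1
    have hkc : (k:ℂ) ≠ 0 := Nat.cast_ne_zero.mpr hk0
    have h2pi : (2 * (Real.pi:ℂ) * Complex.I) ≠ 0 := by
      simp [Real.pi_ne_zero, Complex.I_ne_zero]
    have hm' : ((m:ℂ) * k) * (2 * (Real.pi:ℂ) * Complex.I) = 1 * (2 * (Real.pi:ℂ) * Complex.I) := by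
      field_simp at hm
      linear_combination (-(2 * (Real.pi:ℂ) * Complex.I)) * hm
    have hmk : (m:ℂ) * (k:ℂ) = 1 := mul_right_cancel₀ h2pi hm'
    have hZ : m * (k:ℤ) = 1 := by exact_mod_cast hmk
    have hdvd : (k:ℤ) ∣ 1 := ⟨m, by rw [← hZ]; ring⟩
    have hcases := Int.isUnit_iff.mp (isUnit_of_dvd_one hdvd)
    have hk2' : (2:ℤ) ≤ (k:ℤ) := by exact_mod_cast hk2
    omega
  refine ⟨a, ha0, ?_⟩
  intro z hz
  rw [hform z hz, hk1, pow_one, mul_comm]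
/-- every injective holomorphic self-map of the punctured plane `ℂ \ {0}`
has the form `z ↦ a * z` or `z ↦ a / z` for some `a ≠ 0`. -/
theorem injective_holomorphic_selfmap_punctured_plane
    (φ : ℂ → ℂ)
    (hdiff : DifferentiableOn ℂ φ {0}ᶜ)
    (hmaps : ∀ z : ℂ, z ≠ 0 → φ z ≠ 0)
    (hinj : Set.InjOn φ {0}ᶜ) :
    ∃ a : ℂ, a ≠ 0 ∧ ((∀ z : ℂ, z ≠ 0 → φ z = a * z) ∨ (∀ z : ℂ, z ≠ 0 → φ z = a / z)) := by
  set ψ : ℂ → ℂ := fun z => φ z⁻¹ with hψ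
  have hdiffψ : DifferentiableOn ℂ ψ {0}ᶜ := by
    intro z hz
    have hz0 : z ≠ 0 := hz
    exact ((hdiff.differentiableAt (isOpen_compl_singleton.mem_nhds
      (inv_ne_zero hz0))).comp z (differentiableAt_inv hz0)).differentiableWithinAt
  have hmapsψ : ∀ z : ℂ, z ≠ 0 → ψ z ≠ 0 := fun z hz => hmaps _ (inv_ne_zero hz)
  have hinjψ : Set.InjOn ψ {0}ᶜ := by
    intro z1 h1 z2 h2 he
    have h1' : z1 ≠ 0 := h1
    have h2' : z2 ≠ 0 := h2
    have h3 : (z1⁻¹ : ℂ) ∈ ({0}ᶜ : Set ℂ) := inv_ne_zero h1'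
    have h4 : (z2⁻¹ : ℂ) ∈ ({0}ᶜ : Set ℂ) := inv_ne_zero h2'
    exact inv_injective (hinj h3 h4 he)
  set χ : ℂ → ℂ := fun z => (φ z)⁻¹ with hχ
  have hdiffχ : DifferentiableOn ℂ χ {0}ᶜ := hdiff.inv (fun z hz => hmaps z hz)
  have hinjχ : Set.InjOn χ {0}ᶜ := fun z1 h1 z2 h2 he => hinj h1 h2 (inv_injective he)
  rcases dichotomy hdiff hmaps hinj with ⟨L, hL⟩ | h0p
  · rcases dichotomy hdiffψ hmapsψ hinjψ with ⟨M, hM⟩ | hinfp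
    · exact (both_finite_false hdiff hinj ⟨L, hL⟩ ⟨M, hM⟩).elim
    · obtain ⟨a, ha, hform⟩ := linear_of_pole hdiff hmaps hinj hL hinfp
      exact ⟨a, ha, Or.inl hform⟩
  · rcases dichotomy hdiffψ hmapsψ hinjψ with ⟨M, hM⟩ | hinfp
    · have hinfψ : Tendsto (fun z : ℂ => (ψ z⁻¹)⁻¹) (𝓝[≠] (0:ℂ)) (𝓝 0) := by
        apply h0p.congr'
        filter_upwards [self_mem_nhdsWithin] with z hz
        have hz0 : z ≠ 0 := hz
        rw [hψ]
        simp only [inv_inv]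
      obtain ⟨a, ha, hform⟩ := linear_of_pole hdiffψ hmapsψ hinjψ hM hinfψ
      refine ⟨a, ha, Or.inr ?_⟩
      intro z hz
      have h5 := hform z⁻¹ (inv_ne_zero hz)
      rw [hψ] at h5
      simp only [inv_inv] at h5
      rw [h5, div_eq_mul_inv]
    · exact (both_finite_false hdiffχ hinjχ ⟨0, h0p⟩ ⟨0, hinfp⟩).elim
end

section
/- Let X be a Hausdorff topological space with at least two points and E a vector subspace of C(X) such that the point evaluations {δₓ : x ∈ X} are linearly independent on E. If the weighted composition operator W : E → E, W f = w·(f∘φ), is τ_p-supercyclic, then the symbol φ is injective. -/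
/-- The evaluation functional at `x` on a subspace `E` of functions on `X`. -/
noncomputable def evalFunctional {X : Type*} (E : Submodule ℂ (X → ℂ)) (x : X) :
    ↥E →ₗ[ℂ] ℂ :=
  (LinearMap.proj x).comp E.subtype

/-- The weighted composition map `f ↦ w · (f ∘ φ)` on functions on `X`. -/
def weightedComp {X : Type*} (w : X → ℂ) (φ : X → X) : (X → ℂ) → (X → ℂ) :=
  fun f x => w x * f (φ x)

/-- A module is not the union of two proper submodules. -/
lemma union_eq_top_aux {M : Type*} [AddCommGroup M] [Module ℂ M]
    (K S : Submodule ℂ M) (h : ∀ m : M, m ∈ K ∨ m ∈ S) : K = ⊤ ∨ S = ⊤ := by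
  by_contra hc
  push_neg at hc
  obtain ⟨hK, hS⟩ := hc
  have hKa : ∃ a, a ∉ K := by
    by_contra h'
    push_neg at h'
    exact hK (Submodule.eq_top_iff'.mpr h')
  have hSb : ∃ b, b ∉ S := by
    by_contra h'
    push_neg at h'
    exact hS (Submodule.eq_top_iff'.mpr h')
  obtain ⟨a, ha⟩ := hKa
  obtain ⟨b, hb⟩ := hSb
  have haS : a ∈ S := (h a).resolve_left ha
  have hbK : b ∈ K := (h b).resolve_right hb
  rcases h (a + b) with hab | hab
  · exact ha (by simpa using K.sub_mem hab hbK)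
  · exact hb (by simpa using S.sub_mem hab haS)

/-- If a dense set is contained in the union of the kernel of a continuous functional and
the span of a single vector, then one of them is everything. -/
lemma covered_aux {X : Type*} (E : Submodule ℂ (X → ℂ))
    (L : ↥E →ₗ[ℂ] ℂ) (hL : Continuous L) (f : ↥E) (D : Set ↥E) (hD : Dense D)
    (hsub : D ⊆ (LinearMap.ker L : Set ↥E) ∪ ((ℂ ∙ f : Submodule ℂ ↥E) : Set ↥E)) :
    LinearMap.ker L = ⊤ ∨ (ℂ ∙ f : Submodule ℂ ↥E) = ⊤ := by
  have hK : IsClosed ((LinearMap.ker L : Submodule ℂ ↥E) : Set ↥E) := by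
    have : (LinearMap.ker L : Set ↥E) = L ⁻¹' {0} := rfl
    rw [this]
    exact isClosed_singleton.preimage hL
  have hS : IsClosed ((ℂ ∙ f : Submodule ℂ ↥E) : Set ↥E) :=
    Submodule.closed_of_finiteDimensional _
  have hclosed : IsClosed ((LinearMap.ker L : Set ↥E) ∪ ((ℂ ∙ f : Submodule ℂ ↥E) : Set ↥E)) :=
    hK.union hS
  have hall : ∀ g : ↥E, g ∈ LinearMap.ker L ∨ g ∈ (ℂ ∙ f : Submodule ℂ ↥E) := by
    intro g
    have : g ∈ (LinearMap.ker L : Set ↥E) ∪ ((ℂ ∙ f : Submodule ℂ ↥E) : Set ↥E) := by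
      have := hD.closure_eq ▸ (closure_mono hsub)
      have hg : g ∈ closure D := hD g
      exact hclosed.closure_subset_iff.mpr hsub hg
    exact this
  exact union_eq_top_aux _ _ hall

/-- if `X` is Hausdorff with at least two points, `E ⊆ C(X)` carries the
pointwise topology, the evaluations are linearly independent on `E`, and the weighted
composition operator `W f = w·(f∘φ)` is `τ_p`-supercyclic on `E`, then `φ` is injective. -/
theorem symbol_injective_of_taup_supercyclic
    (X : Type*) [TopologicalSpace X] [T2Space X]
    (hX : ∃ x y : X, x ≠ y)
    (E : Submodule ℂ (X → ℂ))
    (hEcont : ∀ f ∈ E, Continuous f)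
    (hindep : LinearIndependent ℂ (fun x : X => evalFunctional E x))
    (w : X → ℂ) (φ : X → X) (hw : Continuous w) (hφ : Continuous φ)
    (hinv : ∀ f ∈ E, weightedComp w φ f ∈ E)
    (hsc : ∃ f : ↥E, Dense {g : ↥E | ∃ (c : ℂ) (n : ℕ),
      (g : X → ℂ) = c • (weightedComp w φ)^[n] (f : X → ℂ)}) :
    Function.Injective φ := by
  classical
  set δ : X → (↥E →ₗ[ℂ] ℂ) := fun x => evalFunctional E x with hδ
  -- pair independence of evaluation functionals
  have hpair : ∀ (a b : X), a ≠ b → ∀ s t : ℂ, s • δ a + t • δ b = 0 → s = 0 ∧ t = 0 := by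
    intro a b hab s t hst
    have h' := linearIndependent_iff'.mp hindep {a, b}
      (fun z => if z = a then s else t)
    have hsum : ∑ i ∈ ({a, b} : Finset X), (if i = a then s else t) • δ i = 0 := by
      rw [Finset.sum_insert (by simpa using hab), Finset.sum_singleton]
      simpa [hab.symm] using hst
    have := h' hsum
    constructor
    · simpa using this a (by simp)
    · simpa [hab.symm] using this b (by simp)
  have hδne : ∀ a : X, δ a ≠ 0 := fun a => hindep.ne_zero a
  -- continuity of evaluation functionals
  have hδcont : ∀ a : X, Continuous (δ a) := by
    intro a
    exact (continuous_apply a).comp continuous_subtype_val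
  obtain ⟨f, hf⟩ := hsc
  intro a b hab
  by_contra hne
  set D : Set ↥E := {g : ↥E | ∃ (c : ℂ) (n : ℕ),
      (g : X → ℂ) = c • (weightedComp w φ)^[n] (f : X → ℂ)} with hD
  -- elements of the orbit with n = 0 lie in the span of f
  have hspan0 : ∀ (g : ↥E) (c : ℂ), (g : X → ℂ) = c • (f : X → ℂ) →
      g ∈ (ℂ ∙ f : Submodule ℂ ↥E) := by
    intro g c hg
    refine Submodule.mem_span_singleton.mpr ⟨c, ?_⟩
    apply Subtype.ext
    simpa using hg.symm
  -- span f = ⊤ leads to a contradiction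
  have hspan_top : (ℂ ∙ f : Submodule ℂ ↥E) ≠ ⊤ := by
    intro htop
    have hrep : ∀ g : ↥E, ∃ c : ℂ, c • f = g := by
      intro g
      have : g ∈ (ℂ ∙ f : Submodule ℂ ↥E) := htop ▸ Submodule.mem_top
      exact Submodule.mem_span_singleton.mp this
    have hrel : (f : X → ℂ) b • δ a + (-(f : X → ℂ) a) • δ b = 0 := by
      apply LinearMap.ext
      intro g
      obtain ⟨c, hc⟩ := hrep g
      have hga : δ a g = c * (f : X → ℂ) a := by
        rw [← hc]; simp [hδ, evalFunctional]
      have hgb : δ b g = c * (f : X → ℂ) b := by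
        rw [← hc]; simp [hδ, evalFunctional]
      simp only [LinearMap.add_apply, LinearMap.smul_apply, smul_eq_mul, LinearMap.zero_apply,
        hga, hgb]
      ring
    obtain ⟨hfb, hfa⟩ := hpair a b hne _ _ hrel
    have hfa' : (f : X → ℂ) a = 0 := by simpa using hfa
    -- δ a vanishes identically, contradiction
    apply hδne a
    apply LinearMap.ext
    intro g
    obtain ⟨c, hc⟩ := hrep g
    rw [← hc]
    simp [hδ, evalFunctional, hfa']
  -- first functional: L = w b • δ a - w a • δ b
  set L : ↥E →ₗ[ℂ] ℂ := w b • δ a - w a • δ b with hL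
  have hLcont : Continuous L := by
    have : Continuous fun g : ↥E => w b * δ a g - w a * δ b g :=
      ((continuous_const.mul (hδcont a))).sub ((continuous_const.mul (hδcont b)))
    refine this.congr (fun g => ?_)
    simp [hL]
  have hsub : D ⊆ (LinearMap.ker L : Set ↥E) ∪ ((ℂ ∙ f : Submodule ℂ ↥E) : Set ↥E) := by
    intro g hg
    obtain ⟨c, n, hgn⟩ := hg
    cases n with
    | zero => exact Or.inr (hspan0 g c (by simpa using hgn))
    | succ m =>
      left
      show L g = 0
      have hgn' : (g : X → ℂ) = c • weightedComp w φ ((weightedComp w φ)^[m] (f : X → ℂ)) := by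
        rw [hgn, Function.iterate_succ_apply']
      set h : X → ℂ := (weightedComp w φ)^[m] (f : X → ℂ)
      have hga : δ a g = c * (w a * h (φ a)) := by
        simp [hδ, evalFunctional]
        rw [hgn']
        simp [weightedComp]
      have hgb : δ b g = c * (w b * h (φ b)) := by
        simp [hδ, evalFunctional]
        rw [hgn']
        simp [weightedComp]
      simp only [hL, LinearMap.sub_apply, LinearMap.smul_apply, smul_eq_mul, hga, hgb, hab]
      ring
  rcases covered_aux E L hLcont f D hf hsub with hker | hsp
  · -- L = 0, so w a = w b = 0
    have hL0 : L = 0 := LinearMap.ker_eq_top.mp hker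
    have hrel : w b • δ a + (-(w a)) • δ b = 0 := by
      rw [neg_smul, ← sub_eq_add_neg, ← hL, hL0]
    obtain ⟨hwb, hwa⟩ := hpair a b hne _ _ hrel
    have hwa' : w a = 0 := by simpa using hwa
    -- second functional: δ a itself
    have hsub2 : D ⊆ (LinearMap.ker (δ a) : Set ↥E) ∪ ((ℂ ∙ f : Submodule ℂ ↥E) : Set ↥E) := by
      intro g hg
      obtain ⟨c, n, hgn⟩ := hg
      cases n with
      | zero => exact Or.inr (hspan0 g c (by simpa using hgn))
      | succ m =>
        left
        show δ a g = 0
        have hgn' : (g : X → ℂ) = c • weightedComp w φ ((weightedComp w φ)^[m] (f : X → ℂ)) := by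
          rw [hgn, Function.iterate_succ_apply']
        have : δ a g = c * (w a * (weightedComp w φ)^[m] (f : X → ℂ) (φ a)) := by
          simp [hδ, evalFunctional]
          rw [hgn']
          simp [weightedComp]
        rw [this, hwa']
        ring
    rcases covered_aux E (δ a) (hδcont a) f D hf hsub2 with hker2 | hsp2
    · exact hδne a (LinearMap.ker_eq_top.mp hker2)
    · exact hspan_top hsp2
  · exact hspan_top hsp
end

section
/- Let X be a Hausdorff space, E ⊆ C(X) a subspace with the pointwise topology such that δ_{z₁}, δ_{z₂} are linearly independent on E for two distinct points z₁, z₂ ∈ X. If W f = w·(f∘φ) is τ_p-supercyclic on E with supercyclic vector f, then the set of quotients { (∏_{m=0}^{n-1} w(φᵐ(z₁))) · f(φⁿ(z₁)) / ((∏_{m=0}^{n-1} w(φᵐ(z₂))) · f(φⁿ(z₂))) : n ∈ ℕ, f(φⁿ(z₂)) ≠ 0 and the denominator weight product is nonzero } is dense in ℂ. -/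
lemma weightedComp_iterate {X : Type*} (w : X → ℂ) (φ : X → X) (n : ℕ) (g : X → ℂ) (z : X) :
    (weightedComp w φ)^[n] g z
      = (∏ m ∈ Finset.range n, w (φ^[m] z)) * g (φ^[n] z) := by
  induction n generalizing g with
  | zero => simp
  | succ n ih =>
      rw [Function.iterate_succ_apply, ih, Finset.prod_range_succ,
        Function.iterate_succ_apply']
      simp only [weightedComp]
      ring

/-- if `δ_{z₁}, δ_{z₂}` are linearly independent on `E` for distinct
`z₁ ≠ z₂` and `f` is a `τ_p`-supercyclic vector for `W f = w·(f∘φ)`, then the set of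
quotients `∏_{m<n} w(φᵐ z₁) · f(φⁿ z₁) / (∏_{m<n} w(φᵐ z₂) · f(φⁿ z₂))` (over those `n`
for which the denominator is nonzero) is dense in `ℂ`. -/
theorem quotients_dense_of_taup_supercyclic
    (X : Type*) [TopologicalSpace X] [T2Space X]
    (E : Submodule ℂ (X → ℂ))
    (hEcont : ∀ g ∈ E, Continuous g)
    (w : X → ℂ) (φ : X → X) (hw : Continuous w) (hφ : Continuous φ)
    (hinv : ∀ g ∈ E, weightedComp w φ g ∈ E)
    (z₁ z₂ : X) (hz : z₁ ≠ z₂)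
    (hindep : LinearIndependent ℂ ![evalFunctional E z₁, evalFunctional E z₂])
    (f : ↥E)
    (hsc : Dense {g : ↥E | ∃ (c : ℂ) (n : ℕ),
      (g : X → ℂ) = c • (weightedComp w φ)^[n] (f : X → ℂ)}) :
    Dense {c : ℂ | ∃ n : ℕ,
      (f : X → ℂ) (φ^[n] z₂) ≠ 0 ∧
      (∏ m ∈ Finset.range n, w (φ^[m] z₂)) ≠ 0 ∧
      c = ((∏ m ∈ Finset.range n, w (φ^[m] z₁)) * (f : X → ℂ) (φ^[n] z₁)) /
          ((∏ m ∈ Finset.range n, w (φ^[m] z₂)) * (f : X → ℂ) (φ^[n] z₂))} := by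
  set Φ : ↥E →ₗ[ℂ] ℂ × ℂ := (evalFunctional E z₁).prod (evalFunctional E z₂) with hΦdef
  have hΦ : ∀ g : ↥E, Φ g = ((g : X → ℂ) z₁, (g : X → ℂ) z₂) := fun g => rfl
  have hΦcont : Continuous Φ :=
    ((continuous_apply z₁).comp continuous_subtype_val).prodMk
      ((continuous_apply z₂).comp continuous_subtype_val)
  -- surjectivity of Φ from linear independence of the evaluations
  have hΦsurj : Function.Surjective Φ := by
    rw [← LinearMap.range_eq_top]
    by_contra hne
    obtain ⟨ψ, hψ0, hψ⟩ := Submodule.exists_dual_map_eq_bot_of_lt_top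
      (p := LinearMap.range Φ) (lt_top_iff_ne_top.mpr hne) inferInstance
    have hψval : ∀ p : ℂ × ℂ, ψ p = p.1 * ψ (1, 0) + p.2 * ψ (0, 1) := by
      intro p
      have hp : p = p.1 • ((1 : ℂ), (0 : ℂ)) + p.2 • ((0 : ℂ), (1 : ℂ)) := by
        simp [Prod.ext_iff]
      nth_rewrite 1 [hp]
      rw [map_add, map_smul, map_smul, smul_eq_mul, smul_eq_mul]
    have hker : ∀ g : ↥E, ψ (Φ g) = 0 := by
      intro g
      have : ψ (Φ g) ∈ (LinearMap.range Φ).map ψ :=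
        Submodule.mem_map.mpr ⟨Φ g, LinearMap.mem_range_self _ _, rfl⟩
      rwa [hψ, Submodule.mem_bot] at this
    have hab := (LinearIndependent.pair_iff.mp hindep) (ψ (1, 0)) (ψ (0, 1)) ?_
    · apply hψ0
      refine LinearMap.ext fun p => ?_
      rw [hψval p, hab.1, hab.2]
      simp
    · ext g
      have := hker g
      rw [hΦ g, hψval] at this
      simpa [evalFunctional, mul_comm] using this
  -- the image of the supercyclic orbit is dense in ℂ²
  have hdense2 : Dense (Φ '' {g : ↥E | ∃ (c : ℂ) (n : ℕ),
      (g : X → ℂ) = c • (weightedComp w φ)^[n] (f : X → ℂ)}) :=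
    (hΦsurj.denseRange).dense_image hΦcont hsc
  -- main density argument
  rw [dense_iff_inter_open]
  intro V hV ⟨t, htV⟩
  set U : Set (ℂ × ℂ) := {p : ℂ × ℂ | p.2 ≠ 0} ∩ (fun p : ℂ × ℂ => p.1 / p.2) ⁻¹' V with hUdef
  have hUopen : IsOpen U := by
    apply ContinuousOn.isOpen_inter_preimage _ _ hV
    · exact ContinuousOn.div continuousOn_fst continuousOn_snd (fun p hp => hp)
    · exact isOpen_ne_fun continuous_snd continuous_const
  have hUne : U.Nonempty := ⟨(t, 1), by simp [hUdef, htV]⟩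
  obtain ⟨p, hpU, hpD⟩ := (dense_iff_inter_open.mp hdense2) U hUopen hUne
  obtain ⟨g, ⟨c, n, hg⟩, hgp⟩ := hpD
  -- unpack
  have hg1 : (g : X → ℂ) z₁ = c * ((∏ m ∈ Finset.range n, w (φ^[m] z₁)) *
      (f : X → ℂ) (φ^[n] z₁)) := by
    rw [hg]; simp [weightedComp_iterate]
  have hg2 : (g : X → ℂ) z₂ = c * ((∏ m ∈ Finset.range n, w (φ^[m] z₂)) *
      (f : X → ℂ) (φ^[n] z₂)) := by
    rw [hg]; simp [weightedComp_iterate]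
  have hp2 : p.2 = c * ((∏ m ∈ Finset.range n, w (φ^[m] z₂)) * (f : X → ℂ) (φ^[n] z₂)) := by
    rw [← hgp, hΦ]; exact hg2
  have hp1 : p.1 = c * ((∏ m ∈ Finset.range n, w (φ^[m] z₁)) * (f : X → ℂ) (φ^[n] z₁)) := by
    rw [← hgp, hΦ]; exact hg1
  have hp2ne : p.2 ≠ 0 := hpU.1
  have hc : c ≠ 0 := fun h => hp2ne (by rw [hp2, h, zero_mul])
  have hprod : (∏ m ∈ Finset.range n, w (φ^[m] z₂)) ≠ 0 := by
    intro h; apply hp2ne; rw [hp2, h]; ring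
  have hf2 : (f : X → ℂ) (φ^[n] z₂) ≠ 0 := by
    intro h; apply hp2ne; rw [hp2, h]; ring
  refine ⟨p.1 / p.2, hpU.2, n, hf2, hprod, ?_⟩
  rw [hp1, hp2, mul_div_mul_left _ _ hc]
end

section
/- Let X be a compact Hausdorff space, E a Banach space of continuous functions on X with E ↪ (C(X), ‖·‖_∞) continuous, containing a nowhere vanishing function, and such that all evaluations δₓ, x ∈ X, are linearly independent on E. Then no weighted composition operator W f = w·(f∘φ) on E is weakly supercyclic. -/
/-- Evaluation at `x ∈ X` as a linear functional on a space `E` continuously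
embedded in `C(X)` via `J`. -/
noncomputable def evalViaEmbedding {X : Type*} [TopologicalSpace X]
    {E : Type*} [NormedAddCommGroup E] [NormedSpace ℂ E]
    (J : E →L[ℂ] C(X, ℂ)) (x : X) : E →ₗ[ℂ] ℂ where
  toFun f := (J f) x
  map_add' f g := by simp
  map_smul' c f := by simp

namespace WCS

open Polynomial

variable {E : Type*} [NormedAddCommGroup E] [NormedSpace ℂ E]

lemma weak_eval_cont (L : E →L[ℂ] ℂ) : Continuous fun g : WeakSpace ℂ E => L g :=
  WeakBilin.eval_continuous (topDualPairing ℂ E).flip L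

/-- The projective orbit of `f` under `W`, as a subset of the weak space. -/
def orbitSet (W : E →L[ℂ] E) (f : E) : Set (WeakSpace ℂ E) :=
  {g : WeakSpace ℂ E | ∃ (c : ℂ) (n : ℕ), g = c • (W ^ n) f}

lemma dense_pair_approx {S : Set (WeakSpace ℂ E)} (hS : Dense S)
    (L₁ L₂ : E →L[ℂ] ℂ) (t₁ t₂ : ℂ) (hex : ∃ u : E, L₁ u = t₁ ∧ L₂ u = t₂)
    {ε : ℝ} (hε : 0 < ε) :
    ∃ g ∈ S, ‖L₁ g - t₁‖ < ε ∧ ‖L₂ g - t₂‖ < ε := by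
  obtain ⟨u, hu₁, hu₂⟩ := hex
  set U : Set (WeakSpace ℂ E) :=
    {g : WeakSpace ℂ E | ‖L₁ g - t₁‖ < ε} ∩ {g : WeakSpace ℂ E | ‖L₂ g - t₂‖ < ε} with hU
  have hUopen : IsOpen U := by
    apply IsOpen.inter
    · have : {g : WeakSpace ℂ E | ‖L₁ g - t₁‖ < ε}
          = (fun g : WeakSpace ℂ E => L₁ g) ⁻¹' Metric.ball t₁ ε := by
        ext g; simp [Metric.mem_ball, dist_eq_norm]
      rw [this]
      exact (weak_eval_cont L₁).isOpen_preimage _ Metric.isOpen_ball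
    · have : {g : WeakSpace ℂ E | ‖L₂ g - t₂‖ < ε}
          = (fun g : WeakSpace ℂ E => L₂ g) ⁻¹' Metric.ball t₂ ε := by
        ext g; simp [Metric.mem_ball, dist_eq_norm]
      rw [this]
      exact (weak_eval_cont L₂).isOpen_preimage _ Metric.isOpen_ball
  have hUne : U.Nonempty := by
    refine ⟨(u : WeakSpace ℂ E), ?_, ?_⟩
    · show ‖L₁ u - t₁‖ < ε
      simp [hu₁, hε]
    · show ‖L₂ u - t₂‖ < ε
      simp [hu₂, hε]
  obtain ⟨g, hgU, hgS⟩ := hS.inter_open_nonempty U hUopen hUne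
  exact ⟨g, hgS, hgU.1, hgU.2⟩

lemma pair_surj {L₁ L₂ : E →L[ℂ] ℂ} (h1 : L₁ ≠ 0)
    (hnd : ¬ ∃ c : ℂ, L₂ = c • L₁) (s t : ℂ) :
    ∃ u : E, L₁ u = s ∧ L₂ u = t := by
  obtain ⟨a₀, ha₀⟩ : ∃ a₀, L₁ a₀ ≠ 0 := by
    by_contra hcon
    push_neg at hcon
    exact h1 (by ext v; simp [hcon v])
  set a : E := (L₁ a₀)⁻¹ • a₀ with ha
  have hLa : L₁ a = 1 := by simp [ha, ha₀, inv_mul_cancel₀]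
  obtain ⟨b, hb₁, hb₂⟩ : ∃ b, L₁ b = 0 ∧ L₂ b = 1 := by
    by_contra hcon
    push_neg at hcon
    have hker : ∀ v, L₁ v = 0 → L₂ v = 0 := by
      intro v hv
      by_contra hv2
      have := hcon ((L₂ v)⁻¹ • v)
      simp [hv, inv_mul_cancel₀ hv2] at this
    apply hnd
    refine ⟨L₂ a, ?_⟩
    ext v
    have hvk : L₁ (v - L₁ v • a) = 0 := by simp [hLa, mul_comm]
    have := hker _ hvk
    simp only [map_sub, map_smul] at this
    have : L₂ v = L₁ v * L₂ a := by
      have h' := sub_eq_zero.mp this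
      simpa [smul_eq_mul] using h'
    simp [this, smul_eq_mul]; ring
  refine ⟨s • (a - L₂ a • b) + t • b, ?_, ?_⟩ <;>
    simp [map_add, map_smul, map_sub, hLa, hb₁, hb₂, smul_eq_mul]

/-- A nonzero functional cannot vanish on a weakly dense projective orbit. -/
lemma vanish_contra {W : E →L[ℂ] E} {f : E} (hd : Dense (orbitSet W f))
    {L : E →L[ℂ] ℂ} (hL : L ≠ 0) (hvan : ∀ n : ℕ, L ((W ^ n) f) = 0) : False := by
  obtain ⟨u₀, hu₀⟩ : ∃ u₀, L u₀ ≠ 0 := by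
    by_contra hcon; push_neg at hcon; exact hL (by ext v; simp [hcon v])
  have hex : ∃ u : E, L u = 1 ∧ L u = 1 :=
    ⟨(L u₀)⁻¹ • u₀, by simp [inv_mul_cancel₀ hu₀], by simp [inv_mul_cancel₀ hu₀]⟩
  obtain ⟨g, hgS, hg₁, -⟩ := dense_pair_approx hd L L 1 1 hex (by norm_num : (0:ℝ) < 1/2)
  obtain ⟨c, n, rfl⟩ := hgS
  rw [map_smul] at hg₁
  rw [hvan n] at hg₁
  norm_num at hg₁

/-- The core "angle criterion"-style lemma: a weakly dense projective orbit cannot have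
its values against one functional dominated by those against another (independent) one. -/
lemma core {W : E →L[ℂ] E} {f : E} (hd : Dense (orbitSet W f))
    (L₁ L₂ : E →L[ℂ] ℂ) (h1 : L₁ ≠ 0) (hnd : ¬ ∃ c : ℂ, L₂ = c • L₁)
    (K : ℝ) (hK : 0 ≤ K)
    (hb : ∀ n : ℕ, ‖L₂ ((W ^ n) f)‖ ≤ K * ‖L₁ ((W ^ n) f)‖) : False := by
  obtain ⟨g, hgS, hg₁, hg₂⟩ := dense_pair_approx hd L₁ L₂ 1 ((3*K+3 : ℝ) : ℂ)
    (pair_surj h1 hnd 1 ((3*K+3 : ℝ) : ℂ)) (by norm_num : (0:ℝ) < 1/2)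
  obtain ⟨c, n, rfl⟩ := hgS
  rw [map_smul] at hg₁ hg₂
  have e₁ : ‖c • L₁ ((W ^ n) f)‖ < 3/2 := by
    have h' := norm_add_le (c • L₁ ((W ^ n) f) - 1) 1
    simp only [sub_add_cancel, norm_one] at h'
    linarith
  have e₂ : (3*K+3 : ℝ) - 1/2 < ‖c • L₂ ((W ^ n) f)‖ := by
    have h0 : ‖((3*K+3 : ℝ) : ℂ)‖ - ‖c • L₂ ((W ^ n) f) - ((3*K+3 : ℝ) : ℂ)‖
        ≤ ‖c • L₂ ((W ^ n) f)‖ := by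
      have := norm_sub_norm_le (((3*K+3 : ℝ) : ℂ)) (((3*K+3 : ℝ) : ℂ) - c • L₂ ((W ^ n) f))
      simp only [sub_sub_cancel] at this
      calc ‖((3*K+3 : ℝ) : ℂ)‖ - ‖c • L₂ ((W ^ n) f) - ((3*K+3 : ℝ) : ℂ)‖
          = ‖((3*K+3 : ℝ) : ℂ)‖ - ‖((3*K+3 : ℝ) : ℂ) - c • L₂ ((W ^ n) f)‖ := by
            rw [norm_sub_rev]
        _ ≤ ‖c • L₂ ((W ^ n) f)‖ := this
    have hnr : ‖((3*K+3 : ℝ) : ℂ)‖ = 3*K+3 := by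
      rw [Complex.norm_real, Real.norm_eq_abs, abs_of_nonneg (by linarith : (0:ℝ) ≤ 3*K+3)]
    linarith
  have e₃ : ‖c • L₂ ((W ^ n) f)‖ ≤ K * ‖c • L₁ ((W ^ n) f)‖ := by
    rw [norm_smul, norm_smul]
    calc ‖c‖ * ‖L₂ ((W ^ n) f)‖ ≤ ‖c‖ * (K * ‖L₁ ((W ^ n) f)‖) :=
          mul_le_mul_of_nonneg_left (hb n) (norm_nonneg c)
    _ = K * (‖c‖ * ‖L₁ ((W ^ n) f)‖) := by ring
  nlinarith [norm_nonneg (c • L₁ ((W ^ n) f)), norm_nonneg (c • L₂ ((W ^ n) f))]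

/-- If a subspace is not norm-dense there is a nonzero functional vanishing on it. -/
lemma exists_functional_of_not_dense (D : Submodule ℂ E) (hD : ¬ Dense (D : Set E)) :
    ∃ L : E →L[ℂ] ℂ, L ≠ 0 ∧ ∀ v ∈ D, L v = 0 := by
  obtain ⟨x, hx⟩ : ∃ x, x ∉ closure (D : Set E) := by
    by_contra hcon; push_neg at hcon; exact hD hcon
  have hconv : Convex ℝ (closure (D : Set E)) := by
    have : Convex ℝ ((D.restrictScalars ℝ : Submodule ℝ E) : Set E) :=
      (D.restrictScalars ℝ).convex
    exact this.closure
  obtain ⟨L, u, hLD, hLx⟩ :=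
    RCLike.geometric_hahn_banach_closed_point (𝕜 := ℂ) hconv isClosed_closure hx
  have hzero : ∀ v ∈ D, L v = 0 := by
    intro v hv
    by_contra hne
    have hpos : 0 < Complex.normSq (L v) := by rwa [Complex.normSq_pos]
    set t : ℝ := (u + 1) / Complex.normSq (L v) with ht
    have hmem : (((t : ℂ) * (starRingEnd ℂ) (L v)) • v) ∈ D := D.smul_mem _ hv
    have hlt := hLD _ (subset_closure hmem)
    rw [map_smul, smul_eq_mul, RCLike.re_to_complex] at hlt
    have hre : Complex.re ((t : ℂ) * (starRingEnd ℂ) (L v) * L v) = u + 1 := by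
      have h1 : (t : ℂ) * (starRingEnd ℂ) (L v) * L v
          = ((t * Complex.normSq (L v) : ℝ) : ℂ) := by
        rw [mul_assoc, Complex.normSq_eq_conj_mul_self.symm]
        push_cast
        ring
      rw [h1, Complex.ofReal_re, ht, div_mul_cancel₀ _ hpos.ne']
    rw [hre] at hlt
    linarith
  refine ⟨L, ?_, hzero⟩
  intro h0
  have h1 : (0:ℝ) < u := by
    have := hLD 0 (subset_closure (D.zero_mem))
    simpa using this
  rw [h0] at hLx
  simp at hLx
  linarith

/-- `lam` is an eigenvalue of the "adjoint" of `W`. -/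
def HasEig (W : E →L[ℂ] E) (lam : ℂ) : Prop :=
  ∃ L : E →L[ℂ] ℂ, L ≠ 0 ∧ ∀ v : E, L (W v) = lam * L v

lemma const_case (W : E →L[ℂ] E) (a : ℂ) (ha : a ≠ 0) (L : E →L[ℂ] ℂ)
    (hvan : ∀ v : E, L ((aeval W (C a)) v) = 0) : L = 0 := by
  ext v
  have := hvan v
  rw [aeval_C, Algebra.algebraMap_eq_smul_one, ContinuousLinearMap.smul_apply,
    ContinuousLinearMap.one_apply, map_smul, smul_eq_mul] at this
  simpa [ha] using this

lemma ker_zero_of_aeval (W : E →L[ℂ] E) :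
    ∀ N : ℕ, ∀ p : ℂ[X], p ≠ 0 → p.natDegree ≤ N →
      (∀ mu : ℂ, HasEig W mu → ¬ p.IsRoot mu) →
      ∀ L : E →L[ℂ] ℂ, (∀ v : E, L ((aeval W p) v) = 0) → L = 0 := by
  intro N
  induction N with
  | zero =>
    intro p hp0 hdeg hav L hvan
    obtain ⟨a, rfl⟩ := Polynomial.natDegree_eq_zero.mp (Nat.le_zero.mp hdeg)
    exact const_case W a (fun h => hp0 (by simp [h])) L hvan
  | succ N IH =>
    intro p hp0 hdeg hav L hvan
    by_cases hd0 : p.natDegree = 0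
    · obtain ⟨a, rfl⟩ := Polynomial.natDegree_eq_zero.mp hd0
      exact const_case W a (fun h => hp0 (by simp [h])) L hvan
    · have hdpos : 0 < p.degree := natDegree_pos_iff_degree_pos.mp (Nat.pos_of_ne_zero hd0)
      obtain ⟨z, hz⟩ := Complex.exists_root hdpos
      obtain ⟨q, hq⟩ := (dvd_iff_isRoot.mpr hz)
      have hq0 : q ≠ 0 := by rintro rfl; rw [mul_zero] at hq; exact hp0 hq
      have hqdeg : q.natDegree ≤ N := by
        have := natDegree_mul (X_sub_C_ne_zero z) hq0
        rw [← hq, natDegree_X_sub_C] at this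
        omega
      have hqav : ∀ mu : ℂ, HasEig W mu → ¬ q.IsRoot mu := by
        intro mu hmu hroot
        refine hav mu hmu ?_
        rw [IsRoot, hq, eval_mul, hroot.eq_zero, mul_zero]
      set M : E →L[ℂ] ℂ := L.comp (W - z • (1 : E →L[ℂ] E)) with hM
      have hMvan : ∀ v : E, M ((aeval W q) v) = 0 := by
        intro v
        have h1 : (aeval W p) v = (W - z • (1 : E →L[ℂ] E)) ((aeval W q) v) := by
          rw [hq, map_mul]
          rw [ContinuousLinearMap.mul_apply]
          congr 1
          rw [map_sub, aeval_X, aeval_C, Algebra.algebraMap_eq_smul_one]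
        have := hvan v
        rw [h1] at this
        simpa [hM] using this
      have hM0 : M = 0 := IH q hq0 hqdeg hqav M hMvan
      have hrel : ∀ v : E, L (W v) = z * L v := by
        intro v
        have : M v = 0 := by rw [hM0]; rfl
        rw [hM, ContinuousLinearMap.comp_apply, ContinuousLinearMap.sub_apply,
          ContinuousLinearMap.smul_apply, ContinuousLinearMap.one_apply, map_sub,
          map_smul, smul_eq_mul, sub_eq_zero] at this
        exact this
      by_contra hL
      exact hav z ⟨L, hL, hrel⟩ hz

lemma aeval_dense_range (W : E →L[ℂ] E) (p : ℂ[X]) (hp0 : p ≠ 0)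
    (hav : ∀ mu : ℂ, HasEig W mu → ¬ p.IsRoot mu) :
    DenseRange fun v : E => (aeval W p) v := by
  by_contra hnd
  have hnd' : ¬ Dense ((LinearMap.range ((aeval W p : E →L[ℂ] E) : E →ₗ[ℂ] E) : Submodule ℂ E)
      : Set E) := by
    intro hdense
    apply hnd
    have : (LinearMap.range ((aeval W p : E →L[ℂ] E) : E →ₗ[ℂ] E) : Set E)
        = Set.range fun v : E => (aeval W p) v := by
      ext y; simp [LinearMap.mem_range]
    rwa [this] at hdense
  obtain ⟨L, hL, hvan⟩ := exists_functional_of_not_dense _ hnd'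
  exact hL (ker_zero_of_aeval W p.natDegree p hp0 le_rfl hav L
    (fun v => hvan _ ⟨v, rfl⟩))

lemma aeval_comm_pow (W : E →L[ℂ] E) (p : ℂ[X]) (n : ℕ) (v : E) :
    (aeval W p) ((W ^ n) v) = (W ^ n) ((aeval W p) v) := by
  have h1 : aeval W ((X : ℂ[X]) ^ n) = W ^ n := by rw [map_pow, aeval_X]
  have h : (aeval W p) * (W ^ n) = (W ^ n) * (aeval W p) := by
    rw [← h1, ← map_mul, ← map_mul, mul_comm]
  calc (aeval W p) ((W ^ n) v) = ((aeval W p) * (W ^ n)) v := rfl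
    _ = ((W ^ n) * (aeval W p)) v := by rw [h]
    _ = (W ^ n) ((aeval W p) v) := rfl

/-- If the orbit of `f` is weakly dense and `aeval W p` has norm-dense range, then the
orbit of `(aeval W p) f` is weakly dense. -/
lemma orbit_dense_image (W : E →L[ℂ] E) (f : E) (hd : Dense (orbitSet W f))
    (p : ℂ[X]) (hdr : DenseRange fun v : E => (aeval W p) v) :
    Dense (orbitSet W ((aeval W p) f)) := by
  set T : E →L[ℂ] E := aeval W p with hT
  set Tw : WeakSpace ℂ E →L[ℂ] WeakSpace ℂ E := WeakSpace.map T with hTw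
  have hdrw : DenseRange Tw := by
    have base : Dense ((toWeakSpaceCLM ℂ E) '' (Set.range fun v : E => T v)) :=
      ((toWeakSpaceCLM_bijective (𝕜 := ℂ) (E := E)).surjective.denseRange).dense_image
        (toWeakSpaceCLM ℂ E).continuous hdr
    have h2 : (toWeakSpaceCLM ℂ E) '' (Set.range fun v : E => T v) = Set.range Tw := by
      ext g
      constructor
      · rintro ⟨u, ⟨v, rfl⟩, rfl⟩; exact ⟨v, rfl⟩
      · rintro ⟨v, rfl⟩; exact ⟨T v, ⟨v, rfl⟩, rfl⟩
    rwa [h2] at base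
  have h3 : Dense (Tw '' orbitSet W f) := hdrw.dense_image Tw.continuous hd
  have h4 : Tw '' orbitSet W f = orbitSet W (T f) := by
    ext g
    constructor
    · rintro ⟨u, ⟨c, n, rfl⟩, rfl⟩
      refine ⟨c, n, ?_⟩
      show T (c • (W ^ n) f) = c • (W ^ n) (T f)
      rw [map_smul, aeval_comm_pow]
    · rintro ⟨c, n, rfl⟩
      refine ⟨c • (W ^ n) f, ⟨c, n, rfl⟩, ?_⟩
      show T (c • (W ^ n) f) = c • (W ^ n) (T f)
      rw [map_smul, aeval_comm_pow]
  rwa [h4] at h3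

/-- Product of weights along an orbit of `φ`. -/
noncomputable def wprod {X : Type*} (w : X → ℂ) (φ : X → X) : ℕ → X → ℂ
  | 0, _ => 1
  | n + 1, x => wprod w φ n x * w (φ^[n] x)

lemma wprod_succ {X : Type*} (w : X → ℂ) (φ : X → X) (n : ℕ) (x : X) :
    wprod w φ (n + 1) x = wprod w φ n x * w (φ^[n] x) := rfl

lemma wprod_shift {X : Type*} (w : X → ℂ) (φ : X → X) :
    ∀ (n : ℕ) (x : X), wprod w φ n (φ x) * w x = wprod w φ (n + 1) x := by
  intro n
  induction n with
  | zero => intro x; simp [wprod]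
  | succ n IH =>
    intro x
    rw [wprod_succ, wprod_succ]
    have h1 : φ^[n] (φ x) = φ^[n+1] x := (Function.iterate_succ_apply φ n x).symm
    calc wprod w φ n (φ x) * w (φ^[n] (φ x)) * w x
        = (wprod w φ n (φ x) * w x) * w (φ^[n+1] x) := by rw [h1]; ring
      _ = wprod w φ (n+1) x * w (φ^[n+1] x) := by rw [IH]

end WCS
set_option maxHeartbeats 1000000

/-- let `X` be a compact Hausdorff space and `E` a Banach space
continuously embedded in `(C(X), ‖·‖_∞)`, containing a nowhere vanishing function and
with all evaluations linearly independent. Then no weighted composition operator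
`W f = w·(f∘φ)` on `E` is weakly supercyclic. -/
theorem weighted_composition_not_weakly_supercyclic_compact
    (X : Type*) [TopologicalSpace X] [CompactSpace X] [T2Space X]
    (hX : ∃ x y : X, x ≠ y)
    (E : Type*) [NormedAddCommGroup E] [NormedSpace ℂ E] [CompleteSpace E]
    (J : E →L[ℂ] C(X, ℂ)) (hJ : Function.Injective J)
    (hnv : ∃ f : E, ∀ x : X, J f x ≠ 0)
    (hindep : LinearIndependent ℂ (fun x : X => evalViaEmbedding J x))
    (w : X → ℂ) (φ : X → X) (hw : Continuous w) (hφ : Continuous φ)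
    (W : E →L[ℂ] E)
    (hW : ∀ (f : E) (x : X), J (W f) x = w x * J f (φ x)) :
    ¬ ∃ f : E, Dense {g : WeakSpace ℂ E | ∃ (c : ℂ) (n : ℕ), g = c • (W ^ n) f} := by
  classical
  rintro ⟨f₀, hf₀'⟩
  have hf₀ : Dense (WCS.orbitSet W f₀) := hf₀'
  obtain ⟨x₀, y₀, hxy⟩ := hX
  haveI : Nonempty X := ⟨x₀⟩
  -- evaluation functionals as continuous linear maps
  set dlt : X → (E →L[ℂ] ℂ) := fun x => (ContinuousMap.evalCLM ℂ x).comp J with hdlt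
  have dlt_eva : ∀ (x : X) (v : E), dlt x v = (J v) x := fun _ _ => rfl
  have dlt_ne : ∀ x : X, dlt x ≠ 0 := by
    intro x h0
    apply hindep.ne_zero x
    ext v
    simp only [LinearMap.zero_apply]
    show (J v) x = 0
    rw [← dlt_eva x v, h0]
    rfl
  have pair_rel : ∀ x y : X, x ≠ y → ∀ s t : ℂ,
      (∀ v : E, s * (J v) x + t * (J v) y = 0) → s = 0 ∧ t = 0 := by
    intro x y hne s t hrel
    set g : X → ℂ := fun i => if i = x then s else t with hg
    have hsum : ∑ i ∈ ({x, y} : Finset X), g i • (evalViaEmbedding J i) = 0 := by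
      rw [Finset.sum_pair hne]
      have hgx : g x = s := by simp [hg]
      have hgy : g y = t := by simp [hg, hne.symm]
      rw [hgx, hgy]
      ext v
      simp only [LinearMap.add_apply, LinearMap.smul_apply, smul_eq_mul, LinearMap.zero_apply]
      exact hrel v
    have hind := linearIndependent_iff'.mp hindep {x, y} g hsum
    constructor
    · have := hind x (by simp)
      simpa [hg] using this
    · have := hind y (by simp)
      rw [hg] at this
      simpa [hne.symm] using this
  have hnd2 : ∀ x y : X, x ≠ y → ¬ ∃ c : ℂ, dlt y = c • dlt x := by
    rintro x y hne ⟨c, hc⟩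
    have hrel : ∀ v : E, c * (J v) x + (-1) * (J v) y = 0 := by
      intro v
      have h2 : (J v) y = c * (J v) x := by
        have := congrArg (fun L : E →L[ℂ] ℂ => L v) hc
        simpa [dlt_eva, smul_eq_mul] using this
      rw [h2]; ring
    exact absurd (pair_rel x y hne c (-1) hrel).2 (by norm_num)
  -- no zero eigenvalue for the adjoint
  have E1 : ¬ WCS.HasEig W 0 := by
    rintro ⟨L, hL, hrel⟩
    have hvan : ∀ n : ℕ, L ((W ^ (n+1)) f₀) = 0 := by
      intro n
      have h1 : (W ^ (n+1)) f₀ = W ((W ^ n) f₀) := by rw [pow_succ']; rfl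
      rw [h1, hrel, zero_mul]
    by_cases hLf : L f₀ = 0
    · refine WCS.vanish_contra hf₀ hL ?_
      intro n
      cases n with
      | zero => simpa using hLf
      | succ n => exact hvan n
    · obtain ⟨z, hz⟩ : ∃ z : X, ¬ ∃ c : ℂ, dlt z = c • L := by
        by_contra hcon
        push_neg at hcon
        obtain ⟨c₁, hc₁⟩ := hcon x₀
        obtain ⟨c₂, hc₂⟩ := hcon y₀
        have hc₁0 : c₁ ≠ 0 := by
          rintro rfl
          exact dlt_ne x₀ (by rw [hc₁]; exact zero_smul ℂ L)
        refine hnd2 x₀ y₀ hxy ⟨c₂ / c₁, ?_⟩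
        rw [hc₂, hc₁, smul_smul, div_mul_cancel₀ _ hc₁0]
      have hLfn : 0 < ‖L f₀‖ := norm_pos_iff.mpr hLf
      obtain ⟨Tt, hTt⟩ : ∃ t : ℝ, t = 3 * (‖dlt z f₀‖ / ‖L f₀‖) + 3 := ⟨_, rfl⟩
      have hTt0 : 0 ≤ Tt := by rw [hTt]; positivity
      obtain ⟨g, hgS, hg₁, hg₂⟩ := WCS.dense_pair_approx hf₀ L (dlt z) 1 ((Tt : ℝ) : ℂ)
        (WCS.pair_surj hL hz 1 ((Tt : ℝ) : ℂ)) (by norm_num : (0:ℝ) < 1/2)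
      obtain ⟨c, n, rfl⟩ := hgS
      rw [map_smul] at hg₁ hg₂
      cases n with
      | succ n =>
        rw [hvan n, smul_zero, zero_sub, norm_neg, norm_one] at hg₁
        linarith
      | zero =>
        rw [pow_zero] at hg₁ hg₂
        have hone : ((1 : E →L[ℂ] E) f₀) = f₀ := rfl
        rw [hone] at hg₁ hg₂
        have e₁ : ‖c‖ * ‖L f₀‖ < 3/2 := by
          have h' := norm_add_le (c • L f₀ - 1) 1
          simp only [sub_add_cancel, norm_one] at h'
          rw [norm_smul] at h'
          linarith
        have e₂ : Tt - 1/2 < ‖c‖ * ‖dlt z f₀‖ := by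
          have h0 := norm_sub_norm_le (((Tt : ℝ) : ℂ)) (((Tt : ℝ) : ℂ) - c • dlt z f₀)
          simp only [sub_sub_cancel] at h0
          rw [norm_sub_rev (((Tt : ℝ) : ℂ))] at h0
          have hnr : ‖((Tt : ℝ) : ℂ)‖ = Tt := by
            rw [Complex.norm_real, Real.norm_eq_abs, abs_of_nonneg hTt0]
          rw [hnr, norm_smul] at h0
          linarith
        have hb0 : (0:ℝ) ≤ ‖dlt z f₀‖ := norm_nonneg _
        have h1 : ‖c‖ < 3/2 / ‖L f₀‖ := (lt_div_iff₀ hLfn).mpr e₁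
        have h2 : ‖c‖ * ‖dlt z f₀‖ ≤ 3/2 * (‖dlt z f₀‖ / ‖L f₀‖) := by
          calc ‖c‖ * ‖dlt z f₀‖ ≤ (3/2 / ‖L f₀‖) * ‖dlt z f₀‖ :=
                mul_le_mul_of_nonneg_right h1.le hb0
            _ = 3/2 * (‖dlt z f₀‖ / ‖L f₀‖) := by ring
        have hq : (0:ℝ) ≤ ‖dlt z f₀‖ / ‖L f₀‖ := div_nonneg hb0 hLfn.le
        rw [hTt] at e₂
        linarith
  -- uniqueness of adjoint eigenvalues
  have E2 : ∀ lam mu : ℂ, WCS.HasEig W lam → WCS.HasEig W mu → lam = mu := by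
    intro lam mu h₁ h₂
    by_contra hne
    obtain ⟨L₁, hL₁, r₁⟩ := h₁
    obtain ⟨L₂, hL₂, r₂⟩ := h₂
    have iter : ∀ (L : E →L[ℂ] ℂ) (nu : ℂ), (∀ v, L (W v) = nu * L v) →
        ∀ n : ℕ, L ((W ^ n) f₀) = nu ^ n * L f₀ := by
      intro L nu hrel n
      induction n with
      | zero => simp
      | succ n IH =>
        have h1 : (W ^ (n+1)) f₀ = W ((W ^ n) f₀) := by rw [pow_succ']; rfl
        rw [h1, hrel, IH, pow_succ]; ring
    have ha : L₁ f₀ ≠ 0 := by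
      intro h0
      exact WCS.vanish_contra hf₀ hL₁ (fun n => by rw [iter L₁ lam r₁ n, h0, mul_zero])
    have hb : L₂ f₀ ≠ 0 := by
      intro h0
      exact WCS.vanish_contra hf₀ hL₂ (fun n => by rw [iter L₂ mu r₂ n, h0, mul_zero])
    have hndep : ∀ (A B : E →L[ℂ] ℂ) (nuA nuB : ℂ), nuA ≠ nuB → A ≠ 0 → B ≠ 0 →
        (∀ v, A (W v) = nuA * A v) → (∀ v, B (W v) = nuB * B v) →
        ¬ ∃ c : ℂ, B = c • A := by
      rintro A B nuA nuB hneq hA hB rA rB ⟨c, hc⟩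
      obtain ⟨v₀, hv₀⟩ : ∃ v₀, A v₀ ≠ 0 := by
        by_contra hcon; push_neg at hcon; exact hA (by ext v; simp [hcon v])
      have h1 : B (W v₀) = nuB * (c * A v₀) := by
        rw [rB]
        have : B v₀ = c * A v₀ := by rw [hc]; rfl
        rw [this]
      have h2 : B (W v₀) = c * (nuA * A v₀) := by
        have : B (W v₀) = c * A (W v₀) := by rw [hc]; rfl
        rw [this, rA]
      have h3 := h1.symm.trans h2
      have h5 : c * ((nuB - nuA) * A v₀) = 0 := by linear_combination h3
      rcases mul_eq_zero.mp h5 with hc0 | h6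
      · exact hB (by rw [hc, hc0]; exact zero_smul ℂ A)
      · rcases mul_eq_zero.mp h6 with h7 | h7
        · exact hneq (sub_eq_zero.mp h7).symm
        · exact hv₀ h7
    rcases le_total ‖mu‖ ‖lam‖ with hle | hle
    · have han : 0 < ‖L₁ f₀‖ := norm_pos_iff.mpr ha
      refine WCS.core hf₀ L₁ L₂ hL₁ (hndep L₁ L₂ lam mu hne hL₁ hL₂ r₁ r₂)
        (‖L₂ f₀‖ / ‖L₁ f₀‖) (div_nonneg (norm_nonneg _) han.le) ?_
      intro n
      rw [iter L₁ lam r₁ n, iter L₂ mu r₂ n, norm_mul, norm_mul, norm_pow, norm_pow]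
      have hp : ‖mu‖^n ≤ ‖lam‖^n := pow_le_pow_left₀ (norm_nonneg mu) hle n
      have hcan : ‖L₂ f₀‖ / ‖L₁ f₀‖ * ‖L₁ f₀‖ = ‖L₂ f₀‖ := div_mul_cancel₀ _ han.ne'
      have heq : (‖L₂ f₀‖ / ‖L₁ f₀‖) * (‖lam‖^n * ‖L₁ f₀‖) = ‖lam‖^n * ‖L₂ f₀‖ := by
        calc (‖L₂ f₀‖ / ‖L₁ f₀‖) * (‖lam‖^n * ‖L₁ f₀‖)
            = ‖lam‖^n * (‖L₂ f₀‖ / ‖L₁ f₀‖ * ‖L₁ f₀‖) := by ring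
          _ = ‖lam‖^n * ‖L₂ f₀‖ := by rw [hcan]
      rw [heq]
      exact mul_le_mul_of_nonneg_right hp (norm_nonneg _)
    · have hbn : 0 < ‖L₂ f₀‖ := norm_pos_iff.mpr hb
      refine WCS.core hf₀ L₂ L₁ hL₂ (hndep L₂ L₁ mu lam (Ne.symm hne) hL₂ hL₁ r₂ r₁)
        (‖L₁ f₀‖ / ‖L₂ f₀‖) (div_nonneg (norm_nonneg _) hbn.le) ?_
      intro n
      rw [iter L₁ lam r₁ n, iter L₂ mu r₂ n, norm_mul, norm_mul, norm_pow, norm_pow]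
      have hp : ‖lam‖^n ≤ ‖mu‖^n := pow_le_pow_left₀ (norm_nonneg lam) hle n
      have hcan : ‖L₁ f₀‖ / ‖L₂ f₀‖ * ‖L₂ f₀‖ = ‖L₁ f₀‖ := div_mul_cancel₀ _ hbn.ne'
      have heq : (‖L₁ f₀‖ / ‖L₂ f₀‖) * (‖mu‖^n * ‖L₂ f₀‖) = ‖mu‖^n * ‖L₁ f₀‖ := by
        calc (‖L₁ f₀‖ / ‖L₂ f₀‖) * (‖mu‖^n * ‖L₂ f₀‖)
            = ‖mu‖^n * (‖L₁ f₀‖ / ‖L₂ f₀‖ * ‖L₂ f₀‖) := by ring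
          _ = ‖mu‖^n * ‖L₁ f₀‖ := by rw [hcan]
      rw [heq]
      exact mul_le_mul_of_nonneg_right hp (norm_nonneg _)
  -- the span of the orbit is norm dense
  have hDdense : Dense ((Submodule.span ℂ (Set.range fun n : ℕ => (W ^ n) f₀)
      : Submodule ℂ E) : Set E) := by
    by_contra hnd'
    obtain ⟨L, hL, hvanD⟩ := WCS.exists_functional_of_not_dense _ hnd'
    exact WCS.vanish_contra hf₀ hL fun n => hvanD _ (Submodule.subset_span ⟨n, rfl⟩)
  obtain ⟨h, hh⟩ := hnv
  -- the minimum of |J h|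
  obtain ⟨z₀, -, hz₀'⟩ := isCompact_univ.exists_isMinOn Set.univ_nonempty
    (((map_continuous (J h)).norm).continuousOn (s := Set.univ))
  have hz₀ : ∀ y : X, ‖(J h) z₀‖ ≤ ‖(J h) y‖ := fun y => isMinOn_iff.mp hz₀' y (Set.mem_univ y)
  have hmh0 : 0 < ‖(J h) z₀‖ := norm_pos_iff.mpr (hh z₀)
  obtain ⟨ε, hεdef⟩ : ∃ t : ℝ, t = ‖(J h) z₀‖ / (2 * ‖J‖ + 2) := ⟨_, rfl⟩
  have hε0 : 0 < ε := by
    rw [hεdef]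
    have : (0:ℝ) ≤ ‖J‖ := norm_nonneg _
    positivity
  obtain ⟨v, hvD, hvdist⟩ := Metric.mem_closure_iff.mp (hDdense h) ε hε0
  have hvd : ‖v - h‖ < ε := by rwa [dist_comm, dist_eq_norm] at hvdist
  -- the span is contained in the range of `p ↦ (aeval W p) f₀`
  obtain ⟨p₀, hp₀⟩ : ∃ p : Polynomial ℂ, (Polynomial.aeval W p) f₀ = v := by
    let Alin : Polynomial ℂ →ₗ[ℂ] E :=
      { toFun := fun p => (Polynomial.aeval W p) f₀
        map_add' := fun p q => by
          show (Polynomial.aeval W (p + q)) f₀ = _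
          rw [map_add, ContinuousLinearMap.add_apply]
        map_smul' := fun c p => by
          show (Polynomial.aeval W (c • p)) f₀ = c • (Polynomial.aeval W p) f₀
          rw [Polynomial.smul_eq_C_mul, map_mul, Polynomial.aeval_C,
            ContinuousLinearMap.mul_apply, Algebra.algebraMap_eq_smul_one]
          rfl }
    have hsub : Submodule.span ℂ (Set.range fun n : ℕ => (W ^ n) f₀)
        ≤ LinearMap.range Alin := by
      rw [Submodule.span_le]
      rintro - ⟨n, rfl⟩
      exact ⟨(Polynomial.X : Polynomial ℂ) ^ n, by
        show (Polynomial.aeval W ((Polynomial.X : Polynomial ℂ) ^ n)) f₀ = (W ^ n) f₀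
        rw [map_pow, Polynomial.aeval_X]⟩
    obtain ⟨p, hp⟩ := hsub hvD
    exact ⟨p, hp⟩
  -- choose a polynomial avoiding the (at most one) adjoint eigenvalue
  obtain ⟨p, hpne, hav, hclose⟩ :
      ∃ p : Polynomial ℂ, p ≠ 0 ∧ (∀ mu : ℂ, WCS.HasEig W mu → ¬ p.IsRoot mu) ∧
        ‖(Polynomial.aeval W p) f₀ - h‖ < 2 * ε := by
    by_cases hE : ∃ lam : ℂ, WCS.HasEig W lam
    · obtain ⟨lam₀, hlam₀⟩ := hE
      by_cases hroot : Polynomial.eval lam₀ p₀ = 0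
      · obtain ⟨dc, hdcdef⟩ : ∃ t : ℝ, t = ε / (‖f₀‖ + 1) := ⟨_, rfl⟩
        have hdcpos : 0 < dc := by
          rw [hdcdef]; positivity
        have hdc0 : ((dc : ℝ) : ℂ) ≠ 0 := Complex.ofReal_ne_zero.mpr hdcpos.ne'
        have hevalp : Polynomial.eval lam₀ (p₀ + Polynomial.C ((dc : ℝ) : ℂ))
            = ((dc : ℝ) : ℂ) := by
          rw [Polynomial.eval_add, Polynomial.eval_C, hroot, zero_add]
        refine ⟨p₀ + Polynomial.C ((dc : ℝ) : ℂ), ?_, ?_, ?_⟩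
        · intro h0
          rw [h0] at hevalp
          simp only [Polynomial.eval_zero] at hevalp
          exact hdc0 hevalp.symm
        · intro mu hmu hr
          have hmueq : mu = lam₀ := E2 mu lam₀ hmu hlam₀
          rw [hmueq] at hr
          rw [Polynomial.IsRoot, hevalp] at hr
          exact hdc0 hr
        · have haeq : (Polynomial.aeval W (p₀ + Polynomial.C ((dc : ℝ) : ℂ))) f₀
              = v + ((dc : ℝ) : ℂ) • f₀ := by
            rw [map_add, ContinuousLinearMap.add_apply, hp₀, Polynomial.aeval_C,
              Algebra.algebraMap_eq_smul_one]
            rfl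
          rw [haeq]
          have h1 : ‖v + ((dc : ℝ) : ℂ) • f₀ - h‖ ≤ ‖v - h‖ + ‖((dc : ℝ) : ℂ) • f₀‖ := by
            have h2 := norm_add_le (v - h) (((dc : ℝ) : ℂ) • f₀)
            have h3 : v - h + ((dc : ℝ) : ℂ) • f₀ = v + ((dc : ℝ) : ℂ) • f₀ - h := by
              abel
            rwa [h3] at h2
          have h4 : ‖((dc : ℝ) : ℂ) • f₀‖ < ε := by
            rw [norm_smul, Complex.norm_real, Real.norm_eq_abs, abs_of_pos hdcpos, hdcdef]
            rw [div_mul_eq_mul_div, div_lt_iff₀ (by positivity)]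
            nlinarith [norm_nonneg f₀, hε0]
          linarith
      · refine ⟨p₀, fun h0 => hroot (by rw [h0]; simp), ?_, ?_⟩
        · intro mu hmu hr
          have := E2 mu lam₀ hmu hlam₀
          rw [this] at hr
          exact hroot hr
        · rw [hp₀]; linarith
    · have hav : ∀ mu : ℂ, WCS.HasEig W mu → ¬ (p₀ : Polynomial ℂ).IsRoot mu :=
        fun mu hmu => absurd ⟨mu, hmu⟩ hE
      by_cases hp00 : p₀ = 0
      · exfalso
        have hv0 : v = 0 := by rw [← hp₀, hp00, map_zero]; rfl
        rw [hv0, zero_sub, norm_neg] at hvd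
        have hJh : ‖(J h) z₀‖ ≤ ‖J‖ * ‖h‖ := by
          calc ‖(J h) z₀‖ ≤ ‖J h‖ := ContinuousMap.norm_coe_le_norm (J h) z₀
            _ ≤ ‖J‖ * ‖h‖ := J.le_opNorm h
        have hJ0 : (0:ℝ) ≤ ‖J‖ := norm_nonneg _
        rw [hεdef, lt_div_iff₀ (by positivity : (0:ℝ) < 2 * ‖J‖ + 2)] at hvd
        nlinarith [hmh0, norm_nonneg h]
      · exact ⟨p₀, hp00, hav, by rw [hp₀]; linarith⟩
  -- the new weakly supercyclic vector with nowhere vanishing image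
  set f' : E := (Polynomial.aeval W p) f₀ with hf'def
  have hf' : Dense (WCS.orbitSet W f') :=
    WCS.orbit_dense_image W f₀ hf₀ p (WCS.aeval_dense_range W p hpne hav)
  have hF' : ∀ x : X, (J f') x ≠ 0 := by
    intro x h0
    have h1 : ‖(J h) x - (J f') x‖ ≤ ‖J‖ * ‖h - f'‖ := by
      calc ‖(J h) x - (J f') x‖ = ‖(J (h - f')) x‖ := by rw [map_sub]; rfl
        _ ≤ ‖J (h - f')‖ := ContinuousMap.norm_coe_le_norm _ x
        _ ≤ ‖J‖ * ‖h - f'‖ := J.le_opNorm _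
    rw [h0, sub_zero] at h1
    have h2 : ‖(J h) z₀‖ ≤ ‖(J h) x‖ := hz₀ x
    have h3 : ‖h - f'‖ < 2 * ε := by rw [norm_sub_rev]; exact hclose
    have h4 : ‖J‖ * ‖h - f'‖ ≤ ‖J‖ * (2 * ε) :=
      mul_le_mul_of_nonneg_left h3.le (norm_nonneg _)
    have h5 : ‖J‖ * (2 * ε) < ‖(J h) z₀‖ := by
      rw [hεdef]
      have hD : (0:ℝ) < 2 * ‖J‖ + 2 := by positivity
      have heq2 : ‖J‖ * (2 * (‖(J h) z₀‖ / (2 * ‖J‖ + 2)))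
          = (2 * ‖J‖) * ‖(J h) z₀‖ / (2 * ‖J‖ + 2) := by ring
      rw [heq2, div_lt_iff₀ hD]
      nlinarith [hmh0, norm_nonneg J]
    linarith
  -- the weight never vanishes
  have hwnz : ∀ x : X, w x ≠ 0 := by
    intro x hwx
    refine E1 ⟨dlt x, dlt_ne x, fun v => ?_⟩
    show (J (W v)) x = 0 * (dlt x) v
    rw [hW, hwx, zero_mul, zero_mul]
  -- extremes of |w| and |J f'|
  obtain ⟨zw, -, hzw'⟩ := isCompact_univ.exists_isMinOn Set.univ_nonempty
    (hw.norm.continuousOn (s := Set.univ))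
  have hzw : ∀ y : X, ‖w zw‖ ≤ ‖w y‖ := fun y => isMinOn_iff.mp hzw' y (Set.mem_univ y)
  obtain ⟨Zw, -, hZw'⟩ := isCompact_univ.exists_isMaxOn Set.univ_nonempty
    (hw.norm.continuousOn (s := Set.univ))
  have hZw : ∀ y : X, ‖w y‖ ≤ ‖w Zw‖ := fun y => isMaxOn_iff.mp hZw' y (Set.mem_univ y)
  have hmw0 : 0 < ‖w zw‖ := norm_pos_iff.mpr (hwnz zw)
  obtain ⟨zF, -, hzF'⟩ := isCompact_univ.exists_isMinOn Set.univ_nonempty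
    (((map_continuous (J f')).norm).continuousOn (s := Set.univ))
  have hzF : ∀ y : X, ‖(J f') zF‖ ≤ ‖(J f') y‖ := fun y => isMinOn_iff.mp hzF' y (Set.mem_univ y)
  obtain ⟨ZF, -, hZF'⟩ := isCompact_univ.exists_isMaxOn Set.univ_nonempty
    (((map_continuous (J f')).norm).continuousOn (s := Set.univ))
  have hZF : ∀ y : X, ‖(J f') y‖ ≤ ‖(J f') ZF‖ := fun y => isMaxOn_iff.mp hZF' y (Set.mem_univ y)
  have hmF0 : 0 < ‖(J f') zF‖ := norm_pos_iff.mpr (hF' zF)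
  -- the basic formula for iterates
  have key : ∀ (n : ℕ) (v : E) (x : X),
      (J ((W ^ n) v)) x = WCS.wprod w φ n x * (J v) (φ^[n] x) := by
    intro n
    induction n with
    | zero =>
      intro v x
      show (J ((W ^ 0) v)) x = WCS.wprod w φ 0 x * (J v) (φ^[0] x)
      rw [pow_zero]
      show (J v) x = 1 * (J v) x
      rw [one_mul]
    | succ n IH =>
      intro v x
      have h1 : (W ^ (n+1)) v = (W ^ n) (W v) := by rw [pow_succ]; rfl
      rw [h1, IH (W v) x, hW, WCS.wprod_succ, Function.iterate_succ_apply']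
      ring
  -- dichotomy on the symbol φ
  by_cases hid : ∀ x : X, φ x = x
  · -- multiplication operator case
    have keyB : ∀ (n : ℕ) (x : X), (J ((W ^ n) f')) x = (w x) ^ n * (J f') x := by
      intro n x
      rw [key n f' x, Function.iterate_fixed (hid x) n]
      congr 1
      induction n with
      | zero => rfl
      | succ n IH =>
        rw [WCS.wprod_succ, IH, Function.iterate_fixed (hid x) n, pow_succ]
    have keyN : ∀ (n : ℕ) (x : X), ‖(J ((W ^ n) f')) x‖ = ‖w x‖ ^ n * ‖(J f') x‖ := by
      intro n x
      rw [keyB n x, norm_mul, norm_pow]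
    rcases le_total ‖w y₀‖ ‖w x₀‖ with hle | hle
    · refine WCS.core hf' (dlt x₀) (dlt y₀) (dlt_ne x₀) (hnd2 x₀ y₀ hxy)
        (‖(J f') ZF‖ / ‖(J f') zF‖) (div_nonneg (norm_nonneg _) hmF0.le) ?_
      intro n
      show ‖(J ((W ^ n) f')) y₀‖ ≤ _ * ‖(J ((W ^ n) f')) x₀‖
      rw [keyN n y₀, keyN n x₀]
      have hp : ‖w y₀‖ ^ n ≤ ‖w x₀‖ ^ n := pow_le_pow_left₀ (norm_nonneg _) hle n
      have h2 : ‖(J f') y₀‖ ≤ ‖(J f') ZF‖ := hZF y₀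
      have h3 : ‖(J f') zF‖ ≤ ‖(J f') x₀‖ := hzF x₀
      rw [div_mul_eq_mul_div, le_div_iff₀ hmF0]
      have e1 : ‖w y₀‖ ^ n * ‖(J f') y₀‖ * ‖(J f') zF‖
          ≤ ‖w x₀‖ ^ n * ‖(J f') ZF‖ * ‖(J f') x₀‖ := by
        have t1 : ‖(J f') y₀‖ * ‖(J f') zF‖ ≤ ‖(J f') ZF‖ * ‖(J f') x₀‖ :=
          mul_le_mul h2 h3 hmF0.le (norm_nonneg _)
        calc ‖w y₀‖ ^ n * ‖(J f') y₀‖ * ‖(J f') zF‖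
            = ‖w y₀‖ ^ n * (‖(J f') y₀‖ * ‖(J f') zF‖) := by ring
          _ ≤ ‖w x₀‖ ^ n * (‖(J f') y₀‖ * ‖(J f') zF‖) :=
              mul_le_mul_of_nonneg_right hp (by positivity)
          _ ≤ ‖w x₀‖ ^ n * (‖(J f') ZF‖ * ‖(J f') x₀‖) :=
              mul_le_mul_of_nonneg_left t1 (by positivity)
          _ = ‖w x₀‖ ^ n * ‖(J f') ZF‖ * ‖(J f') x₀‖ := by ring
      calc ‖w y₀‖ ^ n * ‖(J f') y₀‖ * ‖(J f') zF‖
          ≤ ‖w x₀‖ ^ n * ‖(J f') ZF‖ * ‖(J f') x₀‖ := e1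
        _ = ‖(J f') ZF‖ * (‖w x₀‖ ^ n * ‖(J f') x₀‖) := by ring
    · refine WCS.core hf' (dlt y₀) (dlt x₀) (dlt_ne y₀) (hnd2 y₀ x₀ hxy.symm)
        (‖(J f') ZF‖ / ‖(J f') zF‖) (div_nonneg (norm_nonneg _) hmF0.le) ?_
      intro n
      show ‖(J ((W ^ n) f')) x₀‖ ≤ _ * ‖(J ((W ^ n) f')) y₀‖
      rw [keyN n y₀, keyN n x₀]
      have hp : ‖w x₀‖ ^ n ≤ ‖w y₀‖ ^ n := pow_le_pow_left₀ (norm_nonneg _) hle n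
      have h2 : ‖(J f') x₀‖ ≤ ‖(J f') ZF‖ := hZF x₀
      have h3 : ‖(J f') zF‖ ≤ ‖(J f') y₀‖ := hzF y₀
      rw [div_mul_eq_mul_div, le_div_iff₀ hmF0]
      have e1 : ‖w x₀‖ ^ n * ‖(J f') x₀‖ * ‖(J f') zF‖
          ≤ ‖w y₀‖ ^ n * ‖(J f') ZF‖ * ‖(J f') y₀‖ := by
        have t1 : ‖(J f') x₀‖ * ‖(J f') zF‖ ≤ ‖(J f') ZF‖ * ‖(J f') y₀‖ :=
          mul_le_mul h2 h3 hmF0.le (norm_nonneg _)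
        calc ‖w x₀‖ ^ n * ‖(J f') x₀‖ * ‖(J f') zF‖
            = ‖w x₀‖ ^ n * (‖(J f') x₀‖ * ‖(J f') zF‖) := by ring
          _ ≤ ‖w y₀‖ ^ n * (‖(J f') x₀‖ * ‖(J f') zF‖) :=
              mul_le_mul_of_nonneg_right hp (by positivity)
          _ ≤ ‖w y₀‖ ^ n * (‖(J f') ZF‖ * ‖(J f') y₀‖) :=
              mul_le_mul_of_nonneg_left t1 (by positivity)
          _ = ‖w y₀‖ ^ n * ‖(J f') ZF‖ * ‖(J f') y₀‖ := by ring
      calc ‖w x₀‖ ^ n * ‖(J f') x₀‖ * ‖(J f') zF‖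
          ≤ ‖w y₀‖ ^ n * ‖(J f') ZF‖ * ‖(J f') y₀‖ := e1
        _ = ‖(J f') ZF‖ * (‖w y₀‖ ^ n * ‖(J f') y₀‖) := by ring
  · -- genuinely moving point case
    push_neg at hid
    obtain ⟨x₁, hx₁⟩ := hid
    refine WCS.core hf' (dlt x₁) (dlt (φ x₁)) (dlt_ne x₁)
      (hnd2 x₁ (φ x₁) (fun hxe => hx₁ hxe.symm))
      ((‖w Zw‖ * ‖(J f') ZF‖) / (‖w zw‖ * ‖(J f') zF‖))
      (div_nonneg (mul_nonneg (norm_nonneg _) (norm_nonneg _))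
        (mul_nonneg hmw0.le hmF0.le)) ?_
    intro n
    show ‖(J ((W ^ n) f')) (φ x₁)‖ ≤ _ * ‖(J ((W ^ n) f')) x₁‖
    rw [key n f' (φ x₁), key n f' x₁, norm_mul, norm_mul]
    have hident : ‖WCS.wprod w φ n (φ x₁)‖ * ‖w x₁‖
        = ‖WCS.wprod w φ n x₁‖ * ‖w (φ^[n] x₁)‖ := by
      rw [← norm_mul, ← norm_mul, WCS.wprod_shift, ← WCS.wprod_succ]
    have b1 : ‖(J f') (φ^[n] (φ x₁))‖ ≤ ‖(J f') ZF‖ := hZF _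
    have b2 : ‖(J f') zF‖ ≤ ‖(J f') (φ^[n] x₁)‖ := hzF _
    have b3 : ‖w zw‖ ≤ ‖w x₁‖ := hzw _
    have b4 : ‖w (φ^[n] x₁)‖ ≤ ‖w Zw‖ := hZw _
    have nnB : (0:ℝ) ≤ ‖WCS.wprod w φ n (φ x₁)‖ := norm_nonneg _
    have nnA : (0:ℝ) ≤ ‖WCS.wprod w φ n x₁‖ := norm_nonneg _
    have nnr : (0:ℝ) ≤ ‖(J f') (φ^[n] (φ x₁))‖ := norm_nonneg _
    have nns : (0:ℝ) ≤ ‖(J f') (φ^[n] x₁)‖ := norm_nonneg _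
    rw [div_mul_eq_mul_div, le_div_iff₀ (mul_pos hmw0 hmF0)]
    have s1 : ‖WCS.wprod w φ n (φ x₁)‖ * ‖w zw‖ ≤ ‖WCS.wprod w φ n x₁‖ * ‖w Zw‖ := by
      calc ‖WCS.wprod w φ n (φ x₁)‖ * ‖w zw‖ ≤ ‖WCS.wprod w φ n (φ x₁)‖ * ‖w x₁‖ :=
            mul_le_mul_of_nonneg_left b3 nnB
        _ = ‖WCS.wprod w φ n x₁‖ * ‖w (φ^[n] x₁)‖ := hident
        _ ≤ ‖WCS.wprod w φ n x₁‖ * ‖w Zw‖ := mul_le_mul_of_nonneg_left b4 nnA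
    have s3 : ‖(J f') (φ^[n] (φ x₁))‖ * ‖(J f') zF‖
        ≤ ‖(J f') ZF‖ * ‖(J f') (φ^[n] x₁)‖ :=
      mul_le_mul b1 b2 hmF0.le (norm_nonneg _)
    calc ‖WCS.wprod w φ n (φ x₁)‖ * ‖(J f') (φ^[n] (φ x₁))‖ * (‖w zw‖ * ‖(J f') zF‖)
        = (‖WCS.wprod w φ n (φ x₁)‖ * ‖w zw‖) * (‖(J f') (φ^[n] (φ x₁))‖ * ‖(J f') zF‖) := by
          ring
      _ ≤ (‖WCS.wprod w φ n x₁‖ * ‖w Zw‖) * (‖(J f') (φ^[n] (φ x₁))‖ * ‖(J f') zF‖) :=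
          mul_le_mul_of_nonneg_right s1 (mul_nonneg nnr hmF0.le)
      _ ≤ (‖WCS.wprod w φ n x₁‖ * ‖w Zw‖) * (‖(J f') ZF‖ * ‖(J f') (φ^[n] x₁)‖) :=
          mul_le_mul_of_nonneg_left s3 (mul_nonneg nnA (norm_nonneg _))
      _ = ‖w Zw‖ * ‖(J f') ZF‖ * (‖WCS.wprod w φ n x₁‖ * ‖(J f') (φ^[n] x₁)‖) := by ring
end

section
/- Let X be Hausdorff and E ⊆ C(X) with the pointwise topology. If φ has two fixed points z₁ ≠ z₂ such that δ_{z₁}, δ_{z₂} are linearly independent on E, then the weighted composition operator W f = w·(f∘φ) is not τ_p-supercyclic on E. -/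
lemma weightedComp_iterate_fixed {X : Type*} (w : X → ℂ) (φ : X → X) {z : X}
    (hz : φ z = z) (g : X → ℂ) (n : ℕ) :
    (weightedComp w φ)^[n] g z = (w z) ^ n * g z := by
  induction n with
  | zero => simp
  | succ n ih =>
    rw [Function.iterate_succ_apply']
    show w z * ((weightedComp w φ)^[n] g (φ z)) = _
    rw [hz, ih, pow_succ]
    ring

lemma eval_surj {X : Type*} (E : Submodule ℂ (X → ℂ)) (z₁ z₂ : X)
    (hindep : LinearIndependent ℂ ![evalFunctional E z₁, evalFunctional E z₂]) :
    ∀ u v : ℂ, ∃ g : ↥E, (g : X → ℂ) z₁ = u ∧ (g : X → ℂ) z₂ = v := by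
  have hind := Fintype.linearIndependent_iff.1 hindep
  -- δ₁ ≠ 0
  have hne : evalFunctional E z₁ ≠ 0 := by
    have := hindep.ne_zero 0
    simpa using this
  have hex : ∃ g : ↥E, (g : X → ℂ) z₁ ≠ 0 := by
    by_contra h
    push_neg at h
    exact hne (LinearMap.ext fun g => by simpa [evalFunctional] using h g)
  obtain ⟨g, hg⟩ := hex
  -- find h with h z₁ = 0, h z₂ ≠ 0
  have hex2 : ∃ h : ↥E, (h : X → ℂ) z₁ = 0 ∧ (h : X → ℂ) z₂ ≠ 0 := by
    by_contra hcon
    push_neg at hcon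
    have hrel : ∀ p : ↥E, (g : X → ℂ) z₁ * (p : X → ℂ) z₂
        - (p : X → ℂ) z₁ * (g : X → ℂ) z₂ = 0 := by
      intro p
      have h1 : ((((g : X → ℂ) z₁) • p - ((p : X → ℂ) z₁) • g : ↥E) : X → ℂ) z₁ = 0 := by
        simp [mul_comm]
      have h2 := hcon _ h1
      have h3 : ((((g : X → ℂ) z₁) • p - ((p : X → ℂ) z₁) • g : ↥E) : X → ℂ) z₂
          = (g : X → ℂ) z₁ * (p : X → ℂ) z₂ - (p : X → ℂ) z₁ * (g : X → ℂ) z₂ := by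
        simp
      rw [h3] at h2
      exact h2
    have := hind ![-((g : X → ℂ) z₂), (g : X → ℂ) z₁] ?_ 1
    · simp at this
      exact hg this
    · ext p
      have := hrel p
      simp [Fin.sum_univ_two, evalFunctional]
      ring_nf
      linear_combination this
  obtain ⟨h, hh1, hh2⟩ := hex2
  intro u v
  refine ⟨(u / (g : X → ℂ) z₁) • g
    + ((v - (u / (g : X → ℂ) z₁) * (g : X → ℂ) z₂) / (h : X → ℂ) z₂) • h, ?_, ?_⟩
  · simp [hh1]
    field_simp
  · simp
    field_simp
    ring

/-- if `φ` has two distinct fixed points `z₁ ≠ z₂` with `δ_{z₁}, δ_{z₂}`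
linearly independent on `E ⊆ C(X)`, then `W f = w·(f∘φ)` is not `τ_p`-supercyclic. -/
theorem not_taup_supercyclic_of_two_fixed_points
    (X : Type*) [TopologicalSpace X] [T2Space X]
    (E : Submodule ℂ (X → ℂ))
    (hEcont : ∀ g ∈ E, Continuous g)
    (w : X → ℂ) (φ : X → X) (hw : Continuous w) (hφ : Continuous φ)
    (hinv : ∀ g ∈ E, weightedComp w φ g ∈ E)
    (z₁ z₂ : X) (hz : z₁ ≠ z₂) (hfix₁ : φ z₁ = z₁) (hfix₂ : φ z₂ = z₂)
    (hindep : LinearIndependent ℂ ![evalFunctional E z₁, evalFunctional E z₂]) :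
    ¬ ∃ f : ↥E, Dense {g : ↥E | ∃ (c : ℂ) (n : ℕ),
      (g : X → ℂ) = c • (weightedComp w φ)^[n] (f : X → ℂ)} := by
  rintro ⟨f, hf⟩
  set S : Set ↥E := {g : ↥E | ∃ (c : ℂ) (n : ℕ),
      (g : X → ℂ) = c • (weightedComp w φ)^[n] (f : X → ℂ)} with hS
  set a : ℂ := w z₁
  set b : ℂ := w z₂
  set α : ℂ := (f : X → ℂ) z₁
  set β : ℂ := (f : X → ℂ) z₂
  set π : ↥E → ℂ × ℂ := fun g => ((g : X → ℂ) z₁, (g : X → ℂ) z₂) with hπ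
  have hπc : Continuous π :=
    ((continuous_apply z₁).comp continuous_subtype_val).prodMk
      ((continuous_apply z₂).comp continuous_subtype_val)
  have hπsurj : Function.Surjective π := by
    rintro ⟨u, v⟩
    obtain ⟨g, hg1, hg2⟩ := eval_surj E z₁ z₂ hindep u v
    exact ⟨g, by simp [hπ, hg1, hg2]⟩
  have hdense : Dense (π '' S) := hπsurj.denseRange.dense_image hπc hf
  -- points of π '' S
  have hmem : ∀ p ∈ π '' S, ∃ (c : ℂ) (n : ℕ), p = (c * a ^ n * α, c * b ^ n * β) := by
    rintro p ⟨g, ⟨c, n, hg⟩, rfl⟩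
    refine ⟨c, n, ?_⟩
    have h1 : (g : X → ℂ) z₁ = c * a ^ n * α := by
      rw [hg]
      simp [weightedComp_iterate_fixed w φ hfix₁]
      ring
    have h2 : (g : X → ℂ) z₂ = c * b ^ n * β := by
      rw [hg]
      simp [weightedComp_iterate_fixed w φ hfix₂]
      ring
    simp [hπ, h1, h2]
  -- a proper closed set containing π '' S gives a contradiction
  have key : ∀ C : Set (ℂ × ℂ), IsClosed C → (π '' S ⊆ C) → C = Set.univ := by
    intro C hC hsub
    have := closure_minimal hsub hC
    rw [hdense.closure_eq] at this
    exact Set.eq_univ_of_univ_subset this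
  rcases eq_or_ne α 0 with hα | hα
  · -- S ⊆ {p | p.1 = 0}
    have := key {p : ℂ × ℂ | p.1 = 0} (isClosed_eq continuous_fst continuous_const) ?_
    · have h10 : ((1 : ℂ), (0 : ℂ)) ∈ ({p : ℂ × ℂ | p.1 = 0} : Set (ℂ × ℂ)) := by
        rw [this]; trivial
      simp at h10
    · intro p hp
      obtain ⟨c, n, rfl⟩ := hmem p hp
      simp [hα]
  rcases eq_or_ne β 0 with hβ | hβ
  · have := key {p : ℂ × ℂ | p.2 = 0} (isClosed_eq continuous_snd continuous_const) ?_
    · have h10 : ((0 : ℂ), (1 : ℂ)) ∈ ({p : ℂ × ℂ | p.2 = 0} : Set (ℂ × ℂ)) := by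
        rw [this]; trivial
      simp at h10
    · intro p hp
      obtain ⟨c, n, rfl⟩ := hmem p hp
      simp [hβ]
  rcases le_total (‖a‖) (‖b‖) with hab | hab
  · -- S ⊆ {p | |β| * |p.1| ≤ |α| * |p.2|}
    have := key {p : ℂ × ℂ | ‖β‖ * ‖p.1‖ ≤ ‖α‖ * ‖p.2‖}
      (isClosed_le (continuous_const.mul (continuous_norm.comp continuous_fst))
        (continuous_const.mul (continuous_norm.comp continuous_snd))) ?_
    · have h10 : ((1 : ℂ), (0 : ℂ)) ∈ ({p : ℂ × ℂ |
          ‖β‖ * ‖p.1‖ ≤ ‖α‖ * ‖p.2‖} : Set (ℂ × ℂ)) := by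
        rw [this]; trivial
      simp at h10
      exact hβ h10
    · intro p hp
      obtain ⟨c, n, rfl⟩ := hmem p hp
      simp only [Set.mem_setOf_eq, norm_mul, norm_pow]
      have hpow : ‖a‖ ^ n ≤ ‖b‖ ^ n :=
        pow_le_pow_left₀ (norm_nonneg a) hab n
      calc ‖β‖ * (‖c‖ * ‖a‖ ^ n * ‖α‖)
          ≤ ‖β‖ * (‖c‖ * ‖b‖ ^ n * ‖α‖) := by
            gcongr
        _ = ‖α‖ * (‖c‖ * ‖b‖ ^ n * ‖β‖) := by ring
  · have := key {p : ℂ × ℂ | ‖α‖ * ‖p.2‖ ≤ ‖β‖ * ‖p.1‖}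
      (isClosed_le (continuous_const.mul (continuous_norm.comp continuous_snd))
        (continuous_const.mul (continuous_norm.comp continuous_fst))) ?_
    · have h10 : ((0 : ℂ), (1 : ℂ)) ∈ ({p : ℂ × ℂ |
          ‖α‖ * ‖p.2‖ ≤ ‖β‖ * ‖p.1‖} : Set (ℂ × ℂ)) := by
        rw [this]; trivial
      simp at h10
      exact hα h10
    · intro p hp
      obtain ⟨c, n, rfl⟩ := hmem p hp
      simp only [Set.mem_setOf_eq, norm_mul, norm_pow]
      have hpow : ‖b‖ ^ n ≤ ‖a‖ ^ n :=
        pow_le_pow_left₀ (norm_nonneg b) hab n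
      calc ‖α‖ * (‖c‖ * ‖b‖ ^ n * ‖β‖)
          ≤ ‖α‖ * (‖c‖ * ‖a‖ ^ n * ‖β‖) := by
            gcongr
        _ = ‖β‖ * (‖c‖ * ‖a‖ ^ n * ‖α‖) := by ring
end

section
/- Let X be a compact Hausdorff space and E ⊆ C(X) with the pointwise topology. If φ has a periodic point z₁ that is not fixed (φᵖ(z₁) = z₁ for some p ≥ 2 but φ(z₁) ≠ z₁) and δ_{z₁}, δ_{φ(z₁)} are linearly independent on E, then W f = w·(f∘φ) is not τ_p-supercyclic on E. -/
private lemma wc_iter {X : Type*} (w : X → ℂ) (φ : X → X) (f : X → ℂ) :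
    ∀ (n : ℕ) (x : X), (weightedComp w φ)^[n] f x
      = (∏ j ∈ Finset.range n, w (φ^[j] x)) * f (φ^[n] x) := by
  intro n
  induction n with
  | zero => intro x; simp
  | succ n ih =>
    intro x
    rw [Function.iterate_succ_apply' (weightedComp w φ)]
    show w x * ((weightedComp w φ)^[n] f (φ x)) = _
    rw [ih (φ x), Finset.prod_range_succ' (fun j => w (φ^[j] x))]
    simp only [Function.iterate_succ_apply φ, Function.iterate_zero_apply, Nat.succ_eq_add_one]
    ring

private lemma prod_shift {F : ℕ → ℂ} {p : ℕ} (h1 : 1 ≤ p) (h : F p = F 0) :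
    ∏ j ∈ Finset.range p, F (j + 1) = ∏ j ∈ Finset.range p, F j := by
  have e1 : ∏ j ∈ Finset.range p, F (j + 1) = ∏ j ∈ Finset.Ico 1 (p + 1), F j := by
    rw [Finset.prod_Ico_eq_prod_range]
    simp [add_comm]
  rw [e1, Finset.prod_Ico_succ_top h1, h,
    Finset.range_eq_Ico, Finset.prod_eq_prod_Ico_succ_bot (by omega : 0 < p), mul_comm]

/-- if `X` is compact Hausdorff, `φ` has a periodic point `z₁` which is
not fixed (`φᵖ(z₁) = z₁` for some `p ≥ 2` but `φ(z₁) ≠ z₁`) and `δ_{z₁}, δ_{φ(z₁)}` are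
linearly independent on `E ⊆ C(X)`, then `W f = w·(f∘φ)` is not `τ_p`-supercyclic. -/
theorem not_taup_supercyclic_of_periodic_not_fixed_point
    (X : Type*) [TopologicalSpace X] [CompactSpace X] [T2Space X]
    (E : Submodule ℂ (X → ℂ))
    (hEcont : ∀ g ∈ E, Continuous g)
    (w : X → ℂ) (φ : X → X) (hw : Continuous w) (hφ : Continuous φ)
    (hinv : ∀ g ∈ E, weightedComp w φ g ∈ E)
    (z₁ : X) (hper : ∃ p : ℕ, 2 ≤ p ∧ φ^[p] z₁ = z₁) (hnotfix : φ z₁ ≠ z₁)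
    (hindep : LinearIndependent ℂ ![evalFunctional E z₁, evalFunctional E (φ z₁)]) :
    ¬ ∃ f : ↥E, Dense {g : ↥E | ∃ (c : ℂ) (n : ℕ),
      (g : X → ℂ) = c • (weightedComp w φ)^[n] (f : X → ℂ)} := by
  rintro ⟨f, hf⟩
  obtain ⟨p, hp2, hpz⟩ := hper
  set W : (X → ℂ) → (X → ℂ) := weightedComp w φ with hWdef
  set D : Set ↥E := {g : ↥E | ∃ (c : ℂ) (n : ℕ),
      (g : X → ℂ) = c • W^[n] (f : X → ℂ)} with hD
  set c₀ : ℂ := ∏ j ∈ Finset.range p, w (φ^[j] z₁) with hc₀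
  -- basic periodicity facts
  have hφp1 : φ^[p] (φ z₁) = φ z₁ := by
    rw [← Function.iterate_succ_apply, Function.iterate_succ_apply', hpz]
  -- one-period step at z₁ and φ z₁
  have step1 : ∀ (m : ℕ) (g : X → ℂ), W^[p + m] g z₁ = c₀ * W^[m] g z₁ := by
    intro m g
    rw [Function.iterate_add_apply, wc_iter, hpz]
  have step2 : ∀ (m : ℕ) (g : X → ℂ), W^[p + m] g (φ z₁) = c₀ * W^[m] g (φ z₁) := by
    intro m g
    rw [Function.iterate_add_apply, wc_iter, hφp1]
    congr 1
    have : ∀ j, φ^[j] (φ z₁) = φ^[j + 1] z₁ := fun j =>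
      (Function.iterate_succ_apply φ j z₁).symm
    calc ∏ j ∈ Finset.range p, w (φ^[j] (φ z₁))
        = ∏ j ∈ Finset.range p, w (φ^[j + 1] z₁) := by
          refine Finset.prod_congr rfl fun j _ => by rw [this]
      _ = c₀ := prod_shift (F := fun j => w (φ^[j] z₁)) (by omega) (by simp [hpz])
  -- powers of the step
  have key : ∀ (q r : ℕ) (g : X → ℂ),
      W^[p * q + r] g z₁ = c₀ ^ q * W^[r] g z₁ ∧
      W^[p * q + r] g (φ z₁) = c₀ ^ q * W^[r] g (φ z₁) := by
    intro q
    induction q with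
    | zero => intro r g; simp
    | succ q ih =>
      intro r g
      have harith : p * (q + 1) + r = p + (p * q + r) := by ring
      rw [harith, step1, step2, (ih r g).1, (ih r g).2]
      constructor <;> ring
  -- the evaluation map into ℂ²
  set T : ↥E →ₗ[ℂ] ℂ × ℂ := (evalFunctional E z₁).prod (evalFunctional E (φ z₁)) with hT
  have hTapp : ∀ g : ↥E, T g = ((g : X → ℂ) z₁, (g : X → ℂ) (φ z₁)) := fun g => rfl
  -- T is surjective
  have hTsurj : Function.Surjective T := by
    rw [← LinearMap.range_eq_top]
    by_contra hne
    obtain ⟨ψ, hψ0, hψ⟩ := (LinearMap.range T).exists_dual_map_eq_bot_of_lt_top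
      (lt_top_iff_ne_top.2 hne) inferInstance
    have hzero : ∀ g : ↥E, ψ (T g) = 0 := by
      intro g
      have : ψ (T g) ∈ (LinearMap.range T).map ψ :=
        Submodule.mem_map_of_mem (LinearMap.mem_range_self T g)
      rw [hψ] at this
      simpa using this
    have hdecomp : ∀ x : ℂ × ℂ, ψ x = x.1 * ψ (1, 0) + x.2 * ψ (0, 1) := by
      intro x
      have hx : x = x.1 • ((1 : ℂ), (0 : ℂ)) + x.2 • ((0 : ℂ), (1 : ℂ)) := by
        ext <;> simp
      calc ψ x = ψ (x.1 • ((1 : ℂ), (0 : ℂ)) + x.2 • ((0 : ℂ), (1 : ℂ))) := by rw [← hx]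
        _ = x.1 * ψ (1, 0) + x.2 * ψ (0, 1) := by
            rw [map_add, map_smul, map_smul, smul_eq_mul, smul_eq_mul]
    have hcoef := LinearIndependent.pair_iff.mp hindep (ψ (1, 0)) (ψ (0, 1)) ?_
    · apply hψ0
      refine LinearMap.ext fun x => ?_
      rw [hdecomp x, hcoef.1, hcoef.2]
      simp
    · ext g
      have := hzero g
      rw [hdecomp (T g)] at this
      simpa [hTapp g, evalFunctional, mul_comm] using this
  -- T is continuous
  have hTcont : Continuous T := by
    have h1 : Continuous fun g : ↥E => (g : X → ℂ) z₁ :=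
      (continuous_apply z₁).comp continuous_subtype_val
    have h2 : Continuous fun g : ↥E => (g : X → ℂ) (φ z₁) :=
      (continuous_apply (φ z₁)).comp continuous_subtype_val
    exact h1.prodMk h2
  -- T '' D is dense
  have hdense : Dense (T '' D) := by
    intro v
    obtain ⟨g, rfl⟩ := hTsurj v
    exact image_closure_subset_closure_image hTcont ⟨g, hf g, rfl⟩
  -- the lines
  set v : ℕ → ℂ × ℂ := fun r => (W^[r] (f : X → ℂ) z₁, W^[r] (f : X → ℂ) (φ z₁)) with hv
  set S : Set (ℂ × ℂ) := ⋃ r ∈ Finset.range p, ((ℂ ∙ v r : Submodule ℂ (ℂ × ℂ)) : Set (ℂ × ℂ))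
    with hS
  have hSclosed : IsClosed S := by
    apply Set.Finite.isClosed_biUnion (Finset.range p).finite_toSet
    intro r _
    exact Submodule.closed_of_finiteDimensional _
  have hsub : T '' D ⊆ S := by
    rintro - ⟨g, ⟨c, n, hg⟩, rfl⟩
    have hn : n % p ∈ Finset.range p := Finset.mem_range.2 (Nat.mod_lt n (by omega))
    refine Set.mem_biUnion hn ?_
    refine Submodule.mem_span_singleton.2 ⟨c * c₀ ^ (n / p), ?_⟩
    have hnpr : p * (n / p) + n % p = n := Nat.div_add_mod n p
    obtain ⟨k1, k2⟩ := key (n / p) (n % p) (f : X → ℂ)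
    rw [hnpr] at k1 k2
    rw [hTapp g, hg]
    ext
    · show (c * c₀ ^ (n / p)) * (v (n % p)).1 = c * W^[n] (f : X → ℂ) z₁
      rw [k1]; ring
    · show (c * c₀ ^ (n / p)) * (v (n % p)).2 = c * W^[n] (f : X → ℂ) (φ z₁)
      rw [k2]; ring
  -- hence S = univ
  have hSuniv : ∀ x : ℂ × ℂ, x ∈ S := by
    intro x
    exact closure_minimal hsub hSclosed (hdense x)
  -- extract an injection ℂ → Fin p
  have hmem : ∀ t : ℂ, ∃ r : Fin p, ∃ a : ℂ, a • v (r : ℕ) = ((1 : ℂ), t) := by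
    intro t
    have hx := hSuniv ((1 : ℂ), t)
    rw [hS] at hx
    obtain ⟨r, hr, hx⟩ := Set.mem_iUnion₂.1 hx
    obtain ⟨a, ha⟩ := Submodule.mem_span_singleton.1 hx
    exact ⟨⟨r, Finset.mem_range.1 hr⟩, a, ha⟩
  choose ρ a ha using hmem
  have hinj : Function.Injective ρ := by
    intro t t' htt
    have h1 : a t * (v (ρ t : ℕ)).1 = 1 := congrArg Prod.fst (ha t)
    have h2 : a t * (v (ρ t : ℕ)).2 = t := congrArg Prod.snd (ha t)
    have h1' : a t' * (v (ρ t : ℕ)).1 = 1 := by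
      rw [htt]; exact congrArg Prod.fst (ha t')
    have h2' : a t' * (v (ρ t : ℕ)).2 = t' := by
      rw [htt]; exact congrArg Prod.snd (ha t')
    have haa : a t = a t' := by
      calc a t = a t * (a t' * (v (ρ t : ℕ)).1) := by rw [h1']; ring
        _ = a t' * (a t * (v (ρ t : ℕ)).1) := by ring
        _ = a t' := by rw [h1]; ring
    rw [← h2, ← h2', haa]
  have : Finite ℂ := Finite.of_injective ρ hinj
  exact not_finite ℂ
end

section
/- Let E be a locally convex space over ℂ and T : E → E a continuous linear weakly supercyclic operator. If u ∈ E' satisfies T'(u) ≠ u and the sequence (T'ⁿ(u))ₙ converges in the weak-star topology to some v ∈ E', then v = 0. -/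
open Filter Topology

/-- let `E` be a complex locally convex space and `T` a continuous linear
weakly supercyclic operator on `E`. If `u ∈ E'` is not a fixed point of the transpose
`T'` and `(T'ⁿ u)ₙ` converges weak-star to some `v ∈ E'`, then `v = 0`. -/
theorem weakstar_limit_of_transpose_orbit_is_zero
    (E : Type*) [AddCommGroup E] [Module ℂ E] [TopologicalSpace E]
    [IsTopologicalAddGroup E] [ContinuousSMul ℂ E]
    [Module ℝ E] [IsScalarTower ℝ ℂ E] [LocallyConvexSpace ℝ E]
    (T : E →L[ℂ] E)
    (hsc : ∃ e : E, Dense {g : WeakSpace ℂ E | ∃ (c : ℂ) (n : ℕ), g = c • (T ^ n) e})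
    (u v : E →L[ℂ] ℂ)
    (hu : u.comp T ≠ u)
    (hconv : ∀ e : E, Tendsto (fun n : ℕ => u ((T ^ n) e)) atTop (nhds (v e))) :
    v = 0 := by
  obtain ⟨e₀, hd⟩ := hsc
  -- weak continuity of continuous functionals
  have hwc : ∀ w : E →L[ℂ] ℂ, Continuous fun x : WeakSpace ℂ E => w x := fun w =>
    WeakBilin.eval_continuous ((topDualPairing ℂ E).flip) w
  -- v ∘ T = v
  have hvT : ∀ x : E, v (T x) = v x := by
    intro x
    have h1 : Tendsto (fun n : ℕ => u ((T ^ (n + 1)) x)) atTop (𝓝 (v x)) :=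
      (hconv x).comp (tendsto_add_atTop_nat 1)
    have h2 : Tendsto (fun n : ℕ => u ((T ^ n) (T x))) atTop (𝓝 (v (T x))) := hconv (T x)
    have he : (fun n : ℕ => u ((T ^ (n + 1)) x)) = fun n : ℕ => u ((T ^ n) (T x)) := by
      funext n
      rw [pow_succ]
      rfl
    rw [he] at h1
    exact tendsto_nhds_unique h2 h1
  set a : ℂ := v e₀ with ha
  have hvTn : ∀ n : ℕ, v ((T ^ n) e₀) = a := by
    intro n
    induction n with
    | zero => simp [ha]
    | succ k ih =>
      rw [pow_succ']
      show v (T ((T ^ k) e₀)) = a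
      rw [hvT, ih]
  by_cases ha0 : a = 0
  · -- v vanishes on the dense set, hence v = 0
    have heq : (fun x : WeakSpace ℂ E => v x) = fun _ : WeakSpace ℂ E => (0 : ℂ) := by
      refine Continuous.ext_on hd (hwc v) continuous_const ?_
      rintro x ⟨c, n, rfl⟩
      show v (c • (T ^ n) e₀) = 0
      rw [map_smul, hvTn, ha0, smul_zero]
    ext x
    have := congrFun heq x
    simpa using this
  · exfalso
    set b : ℕ → ℂ := fun n => u ((T ^ n) e₀) with hbdef
    have hb : Tendsto b atTop (𝓝 a) := hconv e₀
    by_cases hba : ∀ n : ℕ, b n = a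
    · -- then u = v on the dense set, so u = v, contradicting u ∘ T ≠ u
      have heq : (fun x : WeakSpace ℂ E => u x) = fun x : WeakSpace ℂ E => v x := by
        refine Continuous.ext_on hd (hwc u) (hwc v) ?_
        rintro x ⟨c, n, rfl⟩
        show u (c • (T ^ n) e₀) = v (c • (T ^ n) e₀)
        rw [map_smul, map_smul, hvTn, ← hba n]
      have huv : u = v := by
        ext x
        exact congrFun heq x
      apply hu
      ext x
      show u (T x) = u x
      rw [huv, hvT]
    · push_neg at hba
      obtain ⟨m, hm⟩ := hba
      -- find n with b n ≠ b m
      have hn : ∃ n : ℕ, b n ≠ b m := by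
        by_contra h
        push_neg at h
        have hb' : Tendsto (fun _ : ℕ => b m) atTop (𝓝 a) := by
          have he : (fun _ : ℕ => b m) = b := funext fun j => (h j).symm
          rw [he]
          exact hb
        exact hm (tendsto_nhds_unique tendsto_const_nhds hb')
      obtain ⟨n, hnm⟩ := hn
      -- compact set containing all b k and a
      have hK : IsCompact (insert a (Set.range b)) := hb.isCompact_insert_range
      obtain ⟨r, hr⟩ : ∃ r : ℂ, r ∉ insert a (Set.range b) := by
        have := hK.ne_univ
        rw [Set.ne_univ_iff_exists_notMem] at this
        exact this
      obtain ⟨δ, hδ, hball⟩ : ∃ δ > 0, Metric.ball r δ ⊆ (insert a (Set.range b))ᶜ := by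
        have : IsOpen (insert a (Set.range b))ᶜ := hK.isClosed.isOpen_compl
        exact Metric.isOpen_iff.1 this r hr
      -- bound on b
      obtain ⟨M, hM⟩ : ∃ M : ℝ, ∀ k, ‖b k‖ ≤ M := by
        have : BddAbove (Set.range fun k => ‖b k‖) := (hb.norm).bddAbove_range
        obtain ⟨M, hM⟩ := this
        exact ⟨M, fun k => hM ⟨k, rfl⟩⟩
      have hM0 : 0 ≤ M := le_trans (norm_nonneg _) (hM 0)
      have hanorm : 0 < ‖a‖ := norm_pos_iff.2 ha0
      set ε : ℝ := δ * ‖a‖ / (2 * (M + ‖a‖ + 1)) with hε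
      have hεpos : 0 < ε := by positivity
      -- preimage point x* with u x* = r, v x* = a
      set α : ℂ := (r - b n) / (b m - b n) with hα
      have hmn : b m - b n ≠ 0 := sub_ne_zero.2 (fun h => hnm (h.symm))
      set x₀ : E := α • (T ^ m) e₀ + (1 - α) • (T ^ n) e₀ with hx₀
      have hux : u x₀ = r := by
        rw [hx₀, map_add, map_smul, map_smul]
        show α * b m + (1 - α) * b n = r
        rw [hα]
        field_simp
        ring
      have hvx : v x₀ = a := by
        rw [hx₀, map_add, map_smul, map_smul, hvTn, hvTn, smul_eq_mul, smul_eq_mul]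
        ring
      -- the open set
      set U : Set (WeakSpace ℂ E) :=
        (fun x : WeakSpace ℂ E => u x) ⁻¹' Metric.ball r ε ∩
          (fun x : WeakSpace ℂ E => v x) ⁻¹' Metric.ball a ε with hU
      have hUopen : IsOpen U :=
        ((Metric.isOpen_ball.preimage (hwc u)).inter (Metric.isOpen_ball.preimage (hwc v)))
      have hUne : U.Nonempty := by
        refine ⟨x₀, ?_, ?_⟩
        · show u x₀ ∈ Metric.ball r ε
          rw [hux]; exact Metric.mem_ball_self hεpos
        · show v x₀ ∈ Metric.ball a ε
          rw [hvx]; exact Metric.mem_ball_self hεpos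
      obtain ⟨x, hxS, hxU⟩ := hd.exists_mem_open hUopen hUne
      obtain ⟨c, k, rfl⟩ := hxS
      obtain ⟨h1, h2⟩ := hxU
      have h1' : ‖c * b k - r‖ < ε := by
        have : u ((c • (T ^ k) e₀ : WeakSpace ℂ E)) = c * b k := by
          show u (c • (T ^ k) e₀) = c * b k
          rw [map_smul]; rfl
        have h1'' : u ((c • (T ^ k) e₀ : WeakSpace ℂ E)) ∈ Metric.ball r ε := h1
        rw [this, Metric.mem_ball, dist_eq_norm] at h1''; exact h1''
      have h2' : ‖c * a - a‖ < ε := by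
        have : v ((c • (T ^ k) e₀ : WeakSpace ℂ E)) = c * a := by
          show v (c • (T ^ k) e₀) = c * a
          rw [map_smul, hvTn]; rfl
        have h2'' : v ((c • (T ^ k) e₀ : WeakSpace ℂ E)) ∈ Metric.ball a ε := h2
        rw [this, Metric.mem_ball, dist_eq_norm] at h2''; exact h2''
      -- b k is δ-far from r
      have hfar : δ ≤ ‖b k - r‖ := by
        by_contra h
        push_neg at h
        have : b k ∈ Metric.ball r δ := by
          rw [Metric.mem_ball, dist_eq_norm]; exact h
        exact hball this (Set.mem_insert_of_mem _ ⟨k, rfl⟩)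
      -- estimate |c - 1|
      have hc1 : ‖c - 1‖ < ε / ‖a‖ := by
        rw [lt_div_iff₀ hanorm]
        have hca : (c - 1) * a = c * a - a := by ring
        calc ‖c - 1‖ * ‖a‖ = ‖(c - 1) * a‖ := (norm_mul _ _).symm
          _ = ‖c * a - a‖ := by rw [hca]
          _ < ε := h2'
      have e1 : ‖b k - c * b k‖ ≤ M * (ε / ‖a‖) := by
        have h3 : b k - c * b k = b k * (1 - c) := by ring
        rw [h3, norm_mul, norm_sub_rev]
        exact mul_le_mul (hM k) hc1.le (norm_nonneg _) hM0
      have tri : ‖b k - r‖ ≤ ‖b k - c * b k‖ + ‖c * b k - r‖ := by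
        have h4 : b k - r = (b k - c * b k) + (c * b k - r) := by ring
        rw [h4]
        exact norm_add_le _ _
      have hD : (0 : ℝ) < 2 * (M + ‖a‖ + 1) := by positivity
      have hεa : ε / ‖a‖ = δ / (2 * (M + ‖a‖ + 1)) := by
        rw [hε, div_div, mul_comm (2 * (M + ‖a‖ + 1)) ‖a‖, ← div_div,
          mul_div_assoc, div_self (ne_of_gt hanorm), mul_one]
      have key2 : M * (ε / ‖a‖) + ε < δ := by
        rw [hεa, hε, ← mul_div_assoc, ← add_div, div_lt_iff₀ hD]
        nlinarith [mul_pos hδ hanorm, mul_nonneg hM0 hδ.le]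
      linarith [tri, e1, h1', key2, hfar]
end
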